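/- Fix λ ∈ (0, λ₀). There exist a constant C > 0 and a function N₁ : ℕ → ℕ, depending only on d, M₀, M₁, λ, with the following property. Let ω ∈ Ω, let μ be a finite-volume Gibbs measure on [n₁,n₂] for ω, and let r ∈ ℕ and n ∈ [n₁,n₂] satisfy: μ{γ : γ(n₁) ∈ B_r and γ(n₂) ∈ B_r} = 1; for all k ≥ r, Σ_{j=n+1}^{n+k} ξ_j(ω) > k(M₁ + λ + log(2d+1)) and Σ_{j=n−k+1}^{n} ξ_j(ω) > k(M₁ + λ + log(2d+1)); n₂ − n > N₁(r); and n − n₁ > N₁(r). Then μ{γ : |γ(n)| > r} < C·e^{−2λr}. -/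

import Mathlib

open MeasureTheory Filter

namespace BKpaper

abbrev X (d : ℕ) := Fin d → ℤ

/-- the max-norm |x| = max_i |x_i|, as a natural number -/
def nm {d : ℕ} (x : X d) : ℕ := Finset.univ.sup fun i => (x i).natAbs

/-- spin value of a boolean: `true ↦ 1`, `false ↦ -1` -/
def sgn (b : Bool) : ℝ := if b then 1 else -1

/-- ξ_m(ω) = M₀ if ω_m = 1, ξ_m(ω) = −M₁ if ω_m = −1 -/
def xi (M₀ M₁ : ℝ) (ω : ℤ → Bool) (m : ℤ) : ℝ := if ω m then M₀ else -M₁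

/-- one admissible step of the lazy random walk -/
def stepOK {d : ℕ} (x y : X d) : Prop := (∑ i, (y i - x i).natAbs) ≤ 1

/-- admissible path on the (discrete) interval [n₁, n₂] -/
def Adm {d : ℕ} (n₁ n₂ : ℤ) (γ : ℤ → X d) : Prop :=
  ∀ n : ℤ, n₁ ≤ n → n < n₂ → stepOK (γ n) (γ (n + 1))

/-- a path frozen outside [n₁,n₂]; used to represent a path on [n₁,n₂] by a
function on all of ℤ -/
def Frozen {d : ℕ} (n₁ n₂ : ℤ) (γ : ℤ → X d) : Prop :=
  (∀ n : ℤ, n ≤ n₁ → γ n = γ n₁) ∧ (∀ n : ℤ, n₂ ≤ n → γ n = γ n₂)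

/-- Φ_{n₁,n₂}(γ,ω) = Σ_{n=n₁+1}^{n₂} V(γ(n)) ω_n -/
noncomputable def Phi {d : ℕ} (V : X d → ℝ) (ω : ℤ → Bool) (n₁ n₂ : ℤ) (γ : ℤ → X d) : ℝ :=
  ∑ n ∈ Finset.Icc (n₁ + 1) n₂, V (γ n) * sgn (ω n)

/-- the Feynman–Kac operator T^{n₁,n₂}(ω) -/
noncomputable def T {d : ℕ} (V : X d → ℝ) (ω : ℤ → Bool) (n₁ n₂ : ℤ)
    (u : X d → ℝ) (x : X d) : ℝ :=
  ((2 * (d : ℝ) + 1) ^ (n₂ - n₁))⁻¹ *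
    ∑' γ : {γ : ℤ → X d // Adm n₁ n₂ γ ∧ Frozen n₁ n₂ γ ∧ γ n₂ = x},
      Real.exp (Phi V ω n₁ n₂ γ.1) * u (γ.1 n₁)

/-- the partition function Z_{n₁,n₂}(x₁,x₂) -/
noncomputable def Z {d : ℕ} (V : X d → ℝ) (ω : ℤ → Bool) (n₁ n₂ : ℤ) (x₁ x₂ : X d) : ℝ :=
  ∑' γ : {γ : ℤ → X d // Adm n₁ n₂ γ ∧ Frozen n₁ n₂ γ ∧ γ n₁ = x₁ ∧ γ n₂ = x₂},
    Real.exp (Phi V ω n₁ n₂ γ.1)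

/-- the class F(c): nonnegative bounded functions with sup φ ≤ c·φ(0) -/
def Fset (d : ℕ) (c : ℝ) : Set (X d → ℝ) :=
  {φ | (∀ x, 0 ≤ φ x) ∧ ∀ x, φ x ≤ c * φ 0}

/-- P is the i.i.d. Bernoulli(1/2) product measure on {−1,1}^ℤ ≃ ℤ → Bool -/
def IsBernoulli (P : Measure (ℤ → Bool)) : Prop :=
  IsProbabilityMeasure P ∧ ∀ (s : Finset ℤ) (f : ℤ → Bool),
    P {ω | ∀ i ∈ s, ω i = f i} = (1 / 2 : ENNReal) ^ s.card

/-- the shift θ^k -/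
def shift (k : ℤ) (ω : ℤ → Bool) : ℤ → Bool := fun n => ω (k + n)

/-- first standard basis vector e₁ of ℤ^d -/
def e1 (d : ℕ) : X d := fun i => if (i : ℕ) = 0 then 1 else 0

/-- the optimal path γ*: γ*_n = 0 if ω_n = 1, γ*_n = e₁ if ω_n = −1 -/
def gstar (d : ℕ) (ω : ℤ → Bool) : ℤ → X d := fun n => if ω n then 0 else e1 d

/-- the pair (m₁,m₂) is (λ,r)-good for ω -/
def Good (d : ℕ) (M₀ M₁ lam : ℝ) (r : ℕ) (m₁ m₂ : ℤ) (ω : ℤ → Bool) : Prop :=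
  m₁ < m₂ ∧
  (∀ j : ℤ, m₁ + 1 ≤ j → j ≤ m₁ + r → ω j = true) ∧
  (∀ k : ℕ, 1 ≤ k →
    (k : ℝ) * (M₁ + lam + Real.log (2 * (d : ℝ) + 1)) <
      ∑ j ∈ Finset.Icc (m₁ + r + 1) (m₁ + r + k), xi M₀ M₁ ω j) ∧
  (∀ j : ℤ, m₂ - r + 1 ≤ j → j ≤ m₂ → ω j = true) ∧
  (∀ k : ℕ, 1 ≤ k →
    (k : ℝ) * (M₁ + lam + Real.log (2 * (d : ℝ) + 1)) <
      ∑ j ∈ Finset.Icc (m₂ - r - k + 1) (m₂ - r), xi M₀ M₁ ω j)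

/-- the ball B_r ⊆ ℤ^d as a finite set -/
noncomputable def ball (d r : ℕ) : Finset (X d) := Fintype.piFinset fun _ => Finset.Icc (-(r : ℤ)) (r : ℤ)

lemma ball_nonempty (d r : ℕ) : (ball d r).Nonempty :=
  ⟨fun _ => 0, by simp [ball, Fintype.mem_piFinset]⟩

/-- the Hilbert projective (pseudo)metric ρ_r on functions restricted to B_r -/
noncomputable def rho (d r : ℕ) (φ ψ : X d → ℝ) : ℝ :=
  Real.log ((ball d r).sup' (ball_nonempty d r) (fun x => φ x / ψ x) *
            (ball d r).sup' (ball_nonempty d r) (fun x => ψ x / φ x))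

/-- diam_r of a set of functions w.r.t. ρ_r -/
noncomputable def diamr (d r : ℕ) (A : Set (X d → ℝ)) : ℝ :=
  sSup {y | ∃ φ ∈ A, ∃ ψ ∈ A, y = rho d r φ ψ}

/-- the set G(λ,r) (with K₁ explicit): φ ∈ F(2K₁) with sup_{|x|>r} φ ≤ sup_{|x|≤r} φ -/
def Gset (d : ℕ) (K₁ : ℝ) (r : ℕ) : Set (X d → ℝ) :=
  {φ | φ ∈ Fset d (2 * K₁) ∧ ∀ x, r < nm x → ∃ z, nm z ≤ r ∧ φ x ≤ φ z}

/-- the set H(λ,r) (with K₁, K₂ explicit) -/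
def Hset (d : ℕ) (K₁ K₂ : ℝ) (r : ℕ) : Set (X d → ℝ) :=
  {φ | φ ∈ Gset d K₁ r ∧ (⨆ x, φ x) = 1 ∧ ∀ y, nm y ≤ r → 1 / K₂ ≤ φ y}

/-- finite-volume Gibbs measure on [n₁,n₂] for ω (paths represented as
functions ℤ → ℤ^d frozen outside [n₁,n₂]) -/
def FVGibbs (d : ℕ) (V : X d → ℝ) (ω : ℤ → Bool) (n₁ n₂ : ℤ)
    (μ : Measure (ℤ → X d)) : Prop :=
  IsProbabilityMeasure μ ∧
  μ {γ | Adm n₁ n₂ γ ∧ Frozen n₁ n₂ γ} = 1 ∧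
  ∀ γ : ℤ → X d, Adm n₁ n₂ γ →
    μ {α | α n₁ = γ n₁ ∧ α n₂ = γ n₂} ≠ 0 →
    μ {α | ∀ n : ℤ, n₁ ≤ n → n ≤ n₂ → α n = γ n} =
      ENNReal.ofReal (Real.exp (Phi V ω n₁ n₂ γ) / Z V ω n₁ n₂ (γ n₁) (γ n₂)) *
        μ {α | α n₁ = γ n₁ ∧ α n₂ = γ n₂}

/-- (infinite-volume) Gibbs measure for ω -/
def GibbsMeasure (d : ℕ) (V : X d → ℝ) (ω : ℤ → Bool) (μ : Measure (ℤ → X d)) : Prop :=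
  IsProbabilityMeasure μ ∧
  μ {α | ∀ n : ℤ, stepOK (α n) (α (n + 1))} = 1 ∧
  ∀ n₁ n₂ : ℤ, n₁ < n₂ → ∀ γ : ℤ → X d, Adm n₁ n₂ γ →
    μ {α | α n₁ = γ n₁ ∧ α n₂ = γ n₂} ≠ 0 →
    μ {α | ∀ n : ℤ, n₁ ≤ n → n ≤ n₂ → α n = γ n} =
      ENNReal.ofReal (Real.exp (Phi V ω n₁ n₂ γ) / Z V ω n₁ n₂ (γ n₁) (γ n₂)) *
        μ {α | α n₁ = γ n₁ ∧ α n₂ = γ n₂}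

/-- the weak localization condition for a measure on two-sided paths -/
def WeakLoc (d : ℕ) (μ : Measure (ℤ → X d)) : Prop :=
  ∀ ε : ℝ, 0 < ε → ∃ r : ℕ,
    Filter.liminf (fun n : ℤ => μ {α | r < nm (α n)}) Filter.atTop < ENNReal.ofReal ε ∧
    Filter.liminf (fun n : ℤ => μ {α | r < nm (α n)}) Filter.atBot < ENNReal.ofReal ε

/-- normalized positive eigenfunction of the cocycle T -/
def IsEigen (d : ℕ) (V : X d → ℝ) (P : Measure (ℤ → Bool))
    (u : (ℤ → Bool) → X d → ℝ) : Prop :=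
  (∀ x : X d, Measurable fun ω => u ω x) ∧
  ∀ᵐ ω ∂P, (∀ x, 0 < u ω x) ∧ BddAbove (Set.range (u ω)) ∧ (⨆ x, u ω x) = 1 ∧
    ∃ κ : ℝ, 0 < κ ∧ ∀ x, T V ω 0 1 (u ω) x = κ * u (shift 1 ω) x



/-! ### basic norm and step lemmas -/

/-- the ℓ¹ norm -/
def l1 {d : ℕ} (x : X d) : ℕ := ∑ i, (x i).natAbs

lemma nm_le_iff {d : ℕ} {x : X d} {k : ℕ} : nm x ≤ k ↔ ∀ i, (x i).natAbs ≤ k := by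
  simp [nm, Finset.sup_le_iff]

lemma l1_eq_zero_iff {d : ℕ} {x : X d} : l1 x = 0 ↔ x = 0 := by
  constructor
  · intro h
    funext i
    have := Finset.sum_eq_zero_iff.mp h i (Finset.mem_univ i)
    simpa [Int.natAbs_eq_zero] using this
  · rintro rfl; simp [l1]

lemma nm_eq_zero_iff {d : ℕ} {x : X d} : nm x = 0 ↔ x = 0 := by
  constructor
  · intro h
    funext i
    have := nm_le_iff.mp h.le i
    simpa [Int.natAbs_eq_zero] using this
  · rintro rfl; simp [nm]

lemma l1_le_d_mul_nm {d : ℕ} (x : X d) : l1 x ≤ d * nm x := by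
  calc l1 x ≤ ∑ _i : Fin d, nm x := by
        refine Finset.sum_le_sum ?_
        intro i _
        exact Finset.le_sup (f := fun i => (x i).natAbs) (Finset.mem_univ i)
    _ = d * nm x := by simp [Finset.sum_const, mul_comm]

lemma stepOK_symm {d : ℕ} {x y : X d} (h : stepOK x y) : stepOK y x := by
  unfold stepOK at *
  have : ∀ i : Fin d, (x i - y i).natAbs = (y i - x i).natAbs := by
    intro i; omega
  calc (∑ i, (x i - y i).natAbs) = ∑ i, (y i - x i).natAbs := by
        exact Finset.sum_congr rfl fun i _ => this i
    _ ≤ 1 := h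

lemma stepOK_coord {d : ℕ} {x y : X d} (h : stepOK x y) (i : Fin d) :
    (y i - x i).natAbs ≤ 1 :=
  le_trans (Finset.single_le_sum (f := fun i => (y i - x i).natAbs)
    (fun _ _ => Nat.zero_le _) (Finset.mem_univ i)) h

lemma nm_step {d : ℕ} {x y : X d} (h : stepOK x y) : nm y ≤ nm x + 1 := by
  rw [nm_le_iff]
  intro i
  have h1 := stepOK_coord h i
  have h2 : (x i).natAbs ≤ nm x :=
    Finset.le_sup (f := fun i => (x i).natAbs) (Finset.mem_univ i)
  omega

lemma stepOK_l1 {d : ℕ} {x y : X d} (h : l1 (y - x) ≤ 1) : stepOK x y := by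
  unfold stepOK
  simpa [l1] using h

lemma l1_e1 {d : ℕ} (hd : 1 ≤ d) : l1 (e1 d) = 1 := by
  unfold l1 e1
  have h0 : (⟨0, hd⟩ : Fin d) ∈ Finset.univ := Finset.mem_univ _
  rw [Finset.sum_eq_single (⟨0, hd⟩ : Fin d)]
  · simp
  · intro b _ hb
    have : (b : ℕ) ≠ 0 := by
      intro hb0; apply hb; exact Fin.ext hb0
    simp [this]
  · intro h; exact absurd h0 h

lemma e1_ne_zero {d : ℕ} (hd : 1 ≤ d) : e1 d ≠ 0 := by
  intro h
  have : l1 (e1 d) = 0 := by rw [h]; simp [l1]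
  rw [l1_e1 hd] at this
  omega

lemma l1_neg {d : ℕ} (x : X d) : l1 (-x) = l1 x := by
  unfold l1; exact Finset.sum_congr rfl fun i _ => by simp

lemma stepOK_gstar_pair {d : ℕ} (hd : 1 ≤ d) {x y : X d}
    (hx : x = 0 ∨ x = e1 d) (hy : y = 0 ∨ y = e1 d) : stepOK x y := by
  apply stepOK_l1
  rcases hx with rfl | rfl <;> rcases hy with rfl | rfl
  · rw [sub_zero, l1_eq_zero_iff.mpr rfl]; omega
  · rw [sub_zero, l1_e1 hd]
  · rw [zero_sub, l1_neg, l1_e1 hd]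
  · rw [sub_self, l1_eq_zero_iff.mpr rfl]; omega

/-! ### the decrementing map -/

noncomputable def dec {d : ℕ} (x : X d) : X d :=
  if h : ∃ i, x i ≠ 0 then Function.update x h.choose (x h.choose - (x h.choose).sign)
  else 0

lemma exists_ne_of_ne_zero {d : ℕ} {x : X d} (h : x ≠ 0) : ∃ i, x i ≠ 0 := by
  by_contra hc
  push_neg at hc
  exact h (funext hc)

lemma dec_zero {d : ℕ} : dec (0 : X d) = 0 := by
  unfold dec
  rw [dif_neg]
  push_neg
  intro i; rfl

lemma stepOK_dec {d : ℕ} (x : X d) : stepOK x (dec x) := by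
  by_cases h : x = 0
  · subst h; rw [dec_zero]; simp [stepOK]
  · have h2 := exists_ne_of_ne_zero h
    unfold stepOK dec
    rw [dif_pos h2]
    set i₀ := h2.choose with hi₀
    have hne : x i₀ ≠ 0 := h2.choose_spec
    rw [Finset.sum_eq_single i₀]
    · rw [Function.update_self]
      rcases Int.lt_trichotomy (x i₀) 0 with h' | h' | h'
      · rw [Int.sign_eq_neg_one_of_neg h']; omega
      · exact absurd h' hne
      · rw [Int.sign_eq_one_of_pos h']; omega
    · intro b _ hb
      rw [Function.update_of_ne hb]; omega
    · intro h'; exact absurd (Finset.mem_univ _) h'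

lemma l1_dec {d : ℕ} (x : X d) (h : x ≠ 0) : l1 (dec x) + 1 = l1 x := by
  have h2 := exists_ne_of_ne_zero h
  unfold l1 dec
  rw [dif_pos h2]
  set i₀ := h2.choose with hi₀
  have hne : x i₀ ≠ 0 := h2.choose_spec
  have key : (x i₀ - (x i₀).sign).natAbs + 1 = (x i₀).natAbs := by
    rcases Int.lt_trichotomy (x i₀) 0 with h' | h' | h'
    · rw [Int.sign_eq_neg_one_of_neg h']; omega
    · exact absurd h' hne
    · rw [Int.sign_eq_one_of_pos h']; omega
  calc (∑ i, ((Function.update x i₀ (x i₀ - (x i₀).sign)) i).natAbs) + 1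
      = ((x i₀ - (x i₀).sign).natAbs + ∑ i ∈ Finset.univ.erase i₀, (x i).natAbs) + 1 := by
        congr 1
        rw [← Finset.add_sum_erase _ (fun i => ((Function.update x i₀ (x i₀ - (x i₀).sign)) i).natAbs) (Finset.mem_univ i₀)]
        congr 1
        · simp
        · exact Finset.sum_congr rfl fun b hb => by
            rw [Function.update_of_ne (Finset.ne_of_mem_erase hb)]
    _ = (x i₀).natAbs + ∑ i ∈ Finset.univ.erase i₀, (x i).natAbs := by omega
    _ = ∑ i, (x i).natAbs := Finset.add_sum_erase _ (fun i => (x i).natAbs) (Finset.mem_univ i₀)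

lemma dec_iter_eq_zero {d : ℕ} (k : ℕ) (x : X d) (h : l1 x ≤ k) : dec^[k] x = 0 := by
  induction k generalizing x with
  | zero =>
    simpa using l1_eq_zero_iff.mp (Nat.le_zero.mp h)
  | succ k ih =>
    rw [Function.iterate_succ_apply]
    by_cases hx : x = 0
    · subst hx; rw [dec_zero]; exact ih 0 (by simp [l1])
    · exact ih (dec x) (by have := l1_dec x hx; omega)



lemma Ioc_eq_Icc (a b : ℤ) : Finset.Ioc a b = Finset.Icc (a + 1) b := by
  ext m; simp only [Finset.mem_Ioc, Finset.mem_Icc]; omega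

lemma sum_Ioc_consec (f : ℤ → ℝ) {a b c : ℤ} (h1 : a ≤ b) (h2 : b ≤ c) :
    ∑ m ∈ Finset.Ioc a b, f m + ∑ m ∈ Finset.Ioc b c, f m = ∑ m ∈ Finset.Ioc a c, f m := by
  rw [← Finset.sum_union, Finset.Ioc_union_Ioc_eq_Ioc h1 h2]
  rw [Finset.disjoint_left]
  intro m hm hm'
  simp only [Finset.mem_Ioc] at hm hm'
  omega

lemma sum_Ioc_succ_top (f : ℤ → ℝ) {a b : ℤ} (h : a ≤ b) :
    ∑ m ∈ Finset.Ioc a (b + 1), f m = (∑ m ∈ Finset.Ioc a b, f m) + f (b + 1) := by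
  rw [← sum_Ioc_consec f h (by omega : b ≤ b + 1)]
  congr 1
  have : Finset.Ioc b (b + 1) = {b + 1} := by
    ext m; simp only [Finset.mem_Ioc, Finset.mem_singleton]; omega
  rw [this, Finset.sum_singleton]

lemma card_Ioc' (a b : ℤ) : ((Finset.Ioc a b).card : ℤ) = if a ≤ b then b - a else 0 := by
  rw [Int.card_Ioc]
  split
  · rw [Int.toNat_of_nonneg (by omega)]
  · rw [Int.toNat_of_nonpos (by omega)]; rfl

/-- a geometric sum bound: `∑_{t ∈ (u, v]} e^{-λ(w-t)} ≤ e^{-λ(w-v)}/(1-e^{-λ})`. -/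
lemma geo_sum {lam : ℝ} (hlam : 0 < lam) (u : ℤ) :
    ∀ v : ℤ, u ≤ v → ∀ w : ℤ, v ≤ w →
      ∑ t ∈ Finset.Ioc u v, Real.exp (-lam * ((w : ℝ) - t)) ≤
        Real.exp (-lam * ((w : ℝ) - v)) / (1 - Real.exp (-lam)) := by
  have hρ : Real.exp (-lam) < 1 := by
    rw [Real.exp_lt_one_iff]; linarith
  have hρpos : 0 < 1 - Real.exp (-lam) := by linarith
  refine fun v hv => Int.le_induction
    (motive := fun v _ => ∀ w : ℤ, v ≤ w →
      ∑ t ∈ Finset.Ioc u v, Real.exp (-lam * ((w : ℝ) - t)) ≤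
        Real.exp (-lam * ((w : ℝ) - v)) / (1 - Real.exp (-lam))) ?_ ?_ v hv
  · intro w hw
    rw [Finset.Ioc_self, Finset.sum_empty]
    positivity
  · intro v hv ih w hw
    rw [sum_Ioc_succ_top _ hv]
    have ihw := ih w (by omega)
    have key : Real.exp (-lam * ((w : ℝ) - v)) / (1 - Real.exp (-lam))
        + Real.exp (-lam * ((w : ℝ) - (v + 1)))
        = Real.exp (-lam * ((w : ℝ) - (v + 1))) / (1 - Real.exp (-lam)) := by
      have hexp : Real.exp (-lam * ((w : ℝ) - v))
          = Real.exp (-lam) * Real.exp (-lam * ((w : ℝ) - (v + 1))) := by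
        rw [← Real.exp_add]; ring_nf
      rw [hexp]
      field_simp
      ring
    push_cast at key ⊢
    linarith [key, ihw]

/-! ### paths: position bounds and finiteness -/

lemma nm_le_along {d : ℕ} {n₁ n₂ : ℤ} {γ : ℤ → X d} (hγ : Adm n₁ n₂ γ)
    {u : ℤ} (hu : n₁ ≤ u) :
    ∀ v : ℤ, u ≤ v → v ≤ n₂ → (nm (γ v) : ℤ) ≤ nm (γ u) + (v - u) := by
  refine fun v hv => Int.le_induction
    (motive := fun v _ => v ≤ n₂ → (nm (γ v) : ℤ) ≤ nm (γ u) + (v - u)) ?_ ?_ v hv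
  · intro _; omega
  · intro v hv ih hv2
    have h1 := ih (by omega)
    have h2 : stepOK (γ v) (γ (v + 1)) := hγ v (by omega) (by omega)
    have h3 := nm_step h2
    push_cast at h1 ⊢
    omega

lemma nm_le_along' {d : ℕ} {n₁ n₂ : ℤ} {γ : ℤ → X d} (hγ : Adm n₁ n₂ γ)
    {u : ℤ} (hu : n₁ ≤ u) :
    ∀ v : ℤ, u ≤ v → v ≤ n₂ → (nm (γ u) : ℤ) ≤ nm (γ v) + (v - u) := by
  refine fun v hv => Int.le_induction
    (motive := fun v _ => v ≤ n₂ → (nm (γ u) : ℤ) ≤ nm (γ v) + (v - u)) ?_ ?_ v hv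
  · intro _; omega
  · intro v hv ih hv2
    have h1 := ih (by omega)
    have h2 : stepOK (γ v) (γ (v + 1)) := hγ v (by omega) (by omega)
    have h3 := nm_step (stepOK_symm h2)
    push_cast at h1 ⊢
    omega

def PathSet (d : ℕ) (n₁ n₂ : ℤ) (x₁ x₂ : X d) : Set (ℤ → X d) :=
  {γ | Adm n₁ n₂ γ ∧ Frozen n₁ n₂ γ ∧ γ n₁ = x₁ ∧ γ n₂ = x₂}

def ball' (d r : ℕ) : Set (X d) := {x | nm x ≤ r}

lemma ball'_finite (d r : ℕ) : (ball' d r).Finite := by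
  have : ball' d r ⊆ Set.pi Set.univ (fun _ : Fin d => {z : ℤ | z.natAbs ≤ r}) := by
    intro x hx
    intro i _
    exact nm_le_iff.mp hx i
  refine Set.Finite.subset (Set.Finite.pi ?_) this
  intro i
  have : {z : ℤ | z.natAbs ≤ r} ⊆ (Set.Icc (-(r:ℤ)) r) := by
    intro z hz
    simp only [Set.mem_setOf_eq] at hz
    constructor <;> omega
  exact Set.Finite.subset (Set.finite_Icc _ _) this

lemma pathSet_finite (d : ℕ) (n₁ n₂ : ℤ) (h12 : n₁ ≤ n₂) (x₁ x₂ : X d) :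
    (PathSet d n₁ n₂ x₁ x₂).Finite := by
  set R : ℕ := nm x₁ + (n₂ - n₁).toNat with hR
  set res : (ℤ → X d) → ({m : ℤ // m ∈ Finset.Icc n₁ n₂} → X d) :=
    fun γ => (fun m => γ m.1) with hres
  apply Set.Finite.of_finite_image (f := res)
  · have himage : res '' (PathSet d n₁ n₂ x₁ x₂) ⊆
        Set.pi Set.univ (fun _ : {m : ℤ // m ∈ Finset.Icc n₁ n₂} => ball' d R) := by
      rintro g ⟨γ, hγ, rfl⟩
      obtain ⟨hAdm, _, he1, _⟩ := hγ
      intro m _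
      simp only [ball', Set.mem_setOf_eq, res]
      have hm := m.2
      rw [Finset.mem_Icc] at hm
      have := nm_le_along hAdm (le_refl n₁) m (by omega) (by omega)
      rw [he1] at this
      omega
    exact Set.Finite.subset (Set.Finite.pi (fun _ => ball'_finite d R)) himage
  · rintro γ hγ γ' hγ' heq
    obtain ⟨-, hF, -, -⟩ := hγ
    obtain ⟨-, hF', -, -⟩ := hγ'
    have hval : ∀ m : ℤ, n₁ ≤ m → m ≤ n₂ → γ m = γ' m := by
      intro m h1 h2
      have : res γ ⟨m, by rw [Finset.mem_Icc]; exact ⟨h1, h2⟩⟩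
          = res γ' ⟨m, by rw [Finset.mem_Icc]; exact ⟨h1, h2⟩⟩ := by rw [heq]
      exact this
    funext m
    rcases le_or_gt m n₁ with h | h
    · rw [hF.1 m h, hF'.1 m h, hval n₁ le_rfl h12]
    · rcases le_or_gt m n₂ with h' | h'
      · exact hval m (by omega) h'
      · rw [hF.2 m (by omega), hF'.2 m (by omega), hval n₂ h12 le_rfl]

/-! ### hitting times -/

noncomputable def tau1 {d : ℕ} (n₁ n : ℤ) (γ : ℤ → X d) : ℤ :=
  if h : ((Finset.Icc n₁ n).filter (fun m => γ m = 0)).Nonempty then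
    ((Finset.Icc n₁ n).filter (fun m => γ m = 0)).max' h else n₁

noncomputable def tau2 {d : ℕ} (n n₂ : ℤ) (γ : ℤ → X d) : ℤ :=
  if h : ((Finset.Ioc n n₂).filter (fun m => γ m = 0)).Nonempty then
    ((Finset.Ioc n n₂).filter (fun m => γ m = 0)).min' h else n₂

lemma tau1_spec {d : ℕ} (n₁ n : ℤ) (γ : ℤ → X d) (h1n : n₁ ≤ n) :
    (n₁ ≤ tau1 n₁ n γ ∧ tau1 n₁ n γ ≤ n) ∧ (γ (tau1 n₁ n γ) = 0 ∨ tau1 n₁ n γ = n₁) ∧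
      (∀ m : ℤ, tau1 n₁ n γ < m → m ≤ n → γ m ≠ 0) := by
  by_cases h : ((Finset.Icc n₁ n).filter (fun m => γ m = 0)).Nonempty
  · rw [tau1, dif_pos h]
    have hmem := Finset.max'_mem _ h
    rw [Finset.mem_filter, Finset.mem_Icc] at hmem
    refine ⟨⟨hmem.1.1, hmem.1.2⟩, Or.inl hmem.2, ?_⟩
    intro m hm1 hm2 hm0
    have hm : m ∈ (Finset.Icc n₁ n).filter (fun m => γ m = 0) := by
      rw [Finset.mem_filter, Finset.mem_Icc]
      exact ⟨⟨by omega, hm2⟩, hm0⟩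
    have := Finset.le_max' _ m hm
    omega
  · rw [tau1, dif_neg h]
    refine ⟨⟨le_refl _, h1n⟩, Or.inr rfl, ?_⟩
    intro m hm1 hm2 hm0
    apply h
    exact ⟨m, by rw [Finset.mem_filter, Finset.mem_Icc]; exact ⟨⟨by omega, hm2⟩, hm0⟩⟩

lemma tau2_spec {d : ℕ} (n n₂ : ℤ) (γ : ℤ → X d) (h2n : n < n₂) :
    (n < tau2 n n₂ γ ∧ tau2 n n₂ γ ≤ n₂) ∧ (γ (tau2 n n₂ γ) = 0 ∨ tau2 n n₂ γ = n₂) ∧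
      (∀ m : ℤ, n < m → m < tau2 n n₂ γ → γ m ≠ 0) := by
  by_cases h : ((Finset.Ioc n n₂).filter (fun m => γ m = 0)).Nonempty
  · rw [tau2, dif_pos h]
    have hmem := Finset.min'_mem _ h
    rw [Finset.mem_filter, Finset.mem_Ioc] at hmem
    refine ⟨⟨hmem.1.1, hmem.1.2⟩, Or.inl hmem.2, ?_⟩
    intro m hm1 hm2 hm0
    have hm : m ∈ (Finset.Ioc n n₂).filter (fun m => γ m = 0) := by
      rw [Finset.mem_filter, Finset.mem_Ioc]
      exact ⟨⟨hm1, by omega⟩, hm0⟩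
    have := Finset.min'_le _ m hm
    omega
  · rw [tau2, dif_neg h]
    refine ⟨⟨h2n, le_refl _⟩, Or.inr rfl, ?_⟩
    intro m hm1 hm2 hm0
    apply h
    exact ⟨m, by rw [Finset.mem_filter, Finset.mem_Ioc]; exact ⟨⟨hm1, by omega⟩, hm0⟩⟩

/-! ### the surgery map -/

noncomputable def surg {d : ℕ} (ω : ℤ → Bool) (t₁ t₂ aa bb : ℤ) (γ : ℤ → X d) : ℤ → X d :=
  fun m =>
    if m ≤ t₁ then γ m
    else if t₂ ≤ m then γ m
    else if m ≤ aa then dec^[(m - t₁).toNat] (γ t₁)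
    else if m < bb then gstar d ω m
    else dec^[(t₂ - m).toNat] (γ t₂)

section Surg

variable {d : ℕ} {ω : ℤ → Bool} {t₁ t₂ aa bb : ℤ} {γ : ℤ → X d}

lemma surg_outer (m : ℤ) (hm : m ≤ t₁ ∨ t₂ ≤ m) : surg ω t₁ t₂ aa bb γ m = γ m := by
  unfold surg
  rcases hm with hm | hm
  · rw [if_pos hm]
  · split_ifs with h1
    · rfl
    · rfl

lemma surg_travel1' (h5 : aa < t₂) (m : ℤ) (hm1 : t₁ ≤ m) (hm2 : m ≤ aa) :
    surg ω t₁ t₂ aa bb γ m = dec^[(m - t₁).toNat] (γ t₁) := by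
  unfold surg
  rcases eq_or_lt_of_le hm1 with rfl | hlt
  · rw [if_pos (le_refl _)]
    simp
  · rw [if_neg (by omega), if_neg (by omega), if_pos hm2]

lemma surg_mid (h2 : t₁ ≤ aa) (h5 : bb ≤ t₂) (m : ℤ) (hm1 : aa < m) (hm2 : m < bb) :
    surg ω t₁ t₂ aa bb γ m = gstar d ω m := by
  unfold surg
  rw [if_neg (by omega), if_neg (by omega), if_neg (by omega), if_pos hm2]

lemma surg_travel2' (h2 : t₁ ≤ aa) (hab : aa < bb) (m : ℤ) (hm1 : bb ≤ m) (hm2 : m ≤ t₂) :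
    surg ω t₁ t₂ aa bb γ m = dec^[(t₂ - m).toNat] (γ t₂) := by
  rcases eq_or_lt_of_le hm2 with rfl | hlt
  · rw [surg_outer _ (Or.inr (le_refl _))]
    simp
  · unfold surg
    rw [if_neg (by omega), if_neg (by omega), if_neg (by omega), if_neg (by omega)]

lemma surg_at_aa (h2 : t₁ ≤ aa) (h5 : aa < t₂) (hl1 : (l1 (γ t₁) : ℤ) ≤ aa - t₁) :
    surg ω t₁ t₂ aa bb γ aa = 0 := by
  rw [surg_travel1' h5 aa h2 (le_refl _)]
  exact dec_iter_eq_zero _ _ (by omega)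

lemma surg_at_bb (h2 : t₁ ≤ aa) (hab : aa < bb) (h5 : bb ≤ t₂)
    (hl2 : (l1 (γ t₂) : ℤ) ≤ t₂ - bb) :
    surg ω t₁ t₂ aa bb γ bb = 0 := by
  rw [surg_travel2' h2 hab bb (le_refl _) h5]
  exact dec_iter_eq_zero _ _ (by omega)

end Surg

section Surg2

variable {d : ℕ} {ω : ℤ → Bool} {n₁ n₂ t₁ t₂ aa bb : ℤ} {γ : ℤ → X d}

lemma gstar_cases (d : ℕ) (ω : ℤ → Bool) (m : ℤ) :
    gstar d ω m = 0 ∨ gstar d ω m = e1 d := by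
  unfold gstar
  split_ifs
  · exact Or.inl rfl
  · exact Or.inr rfl

lemma surg_adm (hd : 1 ≤ d) (hγ : Adm n₁ n₂ γ)
    (h1 : n₁ ≤ t₁) (h2 : t₁ ≤ aa) (hab : aa + 1 < bb) (h5 : bb ≤ t₂) (h6 : t₂ ≤ n₂)
    (hl1 : (l1 (γ t₁) : ℤ) ≤ aa - t₁) (hl2 : (l1 (γ t₂) : ℤ) ≤ t₂ - bb) :
    Adm n₁ n₂ (surg ω t₁ t₂ aa bb γ) := by
  intro m hm1 hm2
  by_cases c1 : m + 1 ≤ t₁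
  · rw [surg_outer _ (Or.inl (by omega)), surg_outer _ (Or.inl c1)]
    exact hγ m hm1 hm2
  · by_cases c2 : m + 1 ≤ aa
    · -- travel-in chain (t₁ ≤ m)
      rw [surg_travel1' (by omega) m (by omega) (by omega),
        surg_travel1' (by omega) (m + 1) (by omega) c2]
      have : (m + 1 - t₁).toNat = (m - t₁).toNat + 1 := by omega
      rw [this, Function.iterate_succ_apply']
      exact stepOK_dec _
    · by_cases c3 : m + 1 ≤ t₁ + 1
      · -- m = t₁ = aa
        have hmt : m = t₁ := by omega
        have haat : aa = t₁ := by omega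
        subst hmt
        rw [surg_outer _ (Or.inl (le_refl _)),
          surg_mid h2 h5 (m + 1) (by omega) (by omega)]
        have hz : γ m = 0 := by
          have := l1_eq_zero_iff (x := γ m)
          have h0 : l1 (γ m) = 0 := by omega
          exact this.mp h0
        rw [hz]
        exact stepOK_gstar_pair hd (Or.inl rfl) (gstar_cases d ω _)
      · by_cases c4 : m ≤ aa
        · -- m = aa, step into mid
          have hma : m = aa := by omega
          subst hma
          have h0 : surg ω t₁ t₂ m bb γ m = 0 := surg_at_aa h2 (by omega) hl1
          rw [h0, surg_mid h2 h5 (m + 1) (by omega) (by omega)]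
          exact stepOK_gstar_pair hd (Or.inl rfl) (gstar_cases d ω _)
        · by_cases c5 : m + 1 < bb
          · -- mid to mid
            rw [surg_mid h2 h5 m (by omega) (by omega),
              surg_mid h2 h5 (m + 1) (by omega) c5]
            exact stepOK_gstar_pair hd (gstar_cases d ω _) (gstar_cases d ω _)
          · by_cases c6 : m + 1 = bb
            · -- step into bb
              rw [surg_mid h2 h5 m (by omega) (by omega)]
              have h0 : surg ω t₁ t₂ aa bb γ (m + 1) = 0 := by
                rw [c6]; exact surg_at_bb h2 (by omega) h5 hl2
              rw [h0]
              exact stepOK_gstar_pair hd (gstar_cases d ω _) (Or.inl rfl)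
            · by_cases c7 : m + 1 ≤ t₂
              · -- travel-out chain: bb ≤ m < t₂
                rw [surg_travel2' h2 (by omega) m (by omega) (by omega),
                  surg_travel2' h2 (by omega) (m + 1) (by omega) c7]
                have : (t₂ - m).toNat = (t₂ - (m + 1)).toNat + 1 := by omega
                rw [this, Function.iterate_succ_apply']
                exact stepOK_symm (stepOK_dec _)
              · -- t₂ ≤ m
                rw [surg_outer _ (Or.inr (by omega : t₂ ≤ m)),
                  surg_outer _ (Or.inr (by omega : t₂ ≤ m + 1))]
                exact hγ m hm1 hm2

lemma surg_frozen (hF : Frozen n₁ n₂ γ) (h1 : n₁ ≤ t₁) (h6 : t₂ ≤ n₂) :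
    Frozen n₁ n₂ (surg ω t₁ t₂ aa bb γ) := by
  constructor
  · intro m hm
    rw [surg_outer _ (Or.inl (by omega)), surg_outer _ (Or.inl (by omega))]
    exact hF.1 m hm
  · intro m hm
    rw [surg_outer _ (Or.inr (by omega)), surg_outer _ (Or.inr (by omega))]
    exact hF.2 m hm

lemma surg_ends (h1 : n₁ ≤ t₁) (h6 : t₂ ≤ n₂) :
    surg ω t₁ t₂ aa bb γ n₁ = γ n₁ ∧ surg ω t₁ t₂ aa bb γ n₂ = γ n₂ :=
  ⟨surg_outer _ (Or.inl h1), surg_outer _ (Or.inr h6)⟩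

end Surg2

/-! ### contribution bounds -/

section Contrib

variable {d : ℕ} {M₀ M₁ : ℝ} {V : X d → ℝ}

lemma contrib_le_M₁ (hV1 : ∀ x : X d, x ≠ 0 → |V x| ≤ M₁) {x : X d} (hx : x ≠ 0) (b : Bool) :
    V x * sgn b ≤ M₁ := by
  have := hV1 x hx
  unfold sgn
  rcases abs_le.mp this with ⟨hl, hr⟩
  split_ifs <;> linarith

lemma contrib_ge (hV0 : V 0 = M₀) (hV1 : ∀ x : X d, x ≠ 0 → |V x| ≤ M₁)
    (hM₀ : 0 ≤ M₀) (hM01 : M₁ ≤ M₀) (x : X d) (b : Bool) :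
    -M₀ ≤ V x * sgn b := by
  unfold sgn
  by_cases hx : x = 0
  · subst hx; rw [hV0]; split_ifs <;> linarith
  · rcases abs_le.mp (hV1 x hx) with ⟨hl, hr⟩
    split_ifs <;> linarith

lemma contrib_gstar (hd : 1 ≤ d) (hV0 : V 0 = M₀) (hV1 : ∀ x : X d, x ≠ 0 → |V x| ≤ M₁)
    (ω : ℤ → Bool) (m : ℤ) :
    xi M₀ M₁ ω m ≤ V (gstar d ω m) * sgn (ω m) := by
  unfold xi gstar sgn
  rcases Bool.dichotomy (ω m) with h | h <;> rw [h] <;> simp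
  · rcases abs_le.mp (hV1 (e1 d) (e1_ne_zero hd)) with ⟨hl, hr⟩
    linarith
  · rw [hV0]

end Contrib

/-! ### the energy gain of surgery -/

lemma phi_gain {d : ℕ} (hd : 1 ≤ d) {M₀ M₁ lam : ℝ} {V : X d → ℝ} {ω : ℤ → Bool}
    {n₁ n₂ n t₁ t₂ aa bb : ℤ} {r : ℕ} {γ : ℤ → X d}
    (hV0 : V 0 = M₀) (hV1 : ∀ x : X d, x ≠ 0 → |V x| ≤ M₁)
    (hM₀ : 0 ≤ M₀) (hM₁ : 0 ≤ M₁) (hM01 : M₁ ≤ M₀)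
    (hwinR : ∀ k : ℕ, r ≤ k →
      (k : ℝ) * (M₁ + lam + Real.log (2 * (d : ℝ) + 1)) <
        ∑ j ∈ Finset.Icc (n + 1) (n + k), xi M₀ M₁ ω j)
    (hwinL : ∀ k : ℕ, r ≤ k →
      (k : ℝ) * (M₁ + lam + Real.log (2 * (d : ℝ) + 1)) <
        ∑ j ∈ Finset.Icc (n - k + 1) n, xi M₀ M₁ ω j)
    (h1 : n₁ ≤ t₁) (h2 : t₁ ≤ aa) (hkm : (r : ℤ) ≤ n - aa) (hkp : (r : ℤ) ≤ bb - 1 - n)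
    (h5 : bb ≤ t₂) (h6 : t₂ ≤ n₂) (hr : 1 ≤ r)
    (hz1 : ∀ m : ℤ, t₁ < m → m ≤ n → γ m ≠ 0)
    (hz2 : ∀ m : ℤ, n < m → m < t₂ → γ m ≠ 0) :
    Phi V ω n₁ n₂ γ
      + (((n - aa : ℤ) : ℝ) + ((bb - 1 - n : ℤ) : ℝ)) * (lam + Real.log (2 * (d : ℝ) + 1))
      - (M₀ + M₁) * (((aa - t₁ : ℤ) : ℝ) + ((t₂ - bb : ℤ) : ℝ) + 1)
      ≤ Phi V ω n₁ n₂ (surg ω t₁ t₂ aa bb γ) := by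
  have hord : t₁ ≤ aa ∧ aa < n ∧ n < bb - 1 ∧ bb ≤ t₂ := by
    refine ⟨h2, by omega, by omega, h5⟩
  set γ' := surg ω t₁ t₂ aa bb γ with hγ'
  set f : ℤ → ℝ := fun m => V (γ m) * sgn (ω m) with hf
  set g : ℤ → ℝ := fun m => V (γ' m) * sgn (ω m) with hg
  have hPhiγ : Phi V ω n₁ n₂ γ = ∑ m ∈ Finset.Ioc n₁ n₂, f m := by
    rw [Phi, Ioc_eq_Icc]
  have hPhiγ' : Phi V ω n₁ n₂ γ' = ∑ m ∈ Finset.Ioc n₁ n₂, g m := by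
    rw [Phi, Ioc_eq_Icc]
  -- reduce to the window
  have houter : ∑ m ∈ Finset.Ioc n₁ n₂, g m - ∑ m ∈ Finset.Ioc n₁ n₂, f m
      = ∑ m ∈ Finset.Ioc t₁ t₂, (g m - f m) := by
    rw [← Finset.sum_sub_distrib]
    rw [← sum_Ioc_consec (fun m => g m - f m) (by omega : n₁ ≤ t₁) (by omega : t₁ ≤ n₂),
      ← sum_Ioc_consec (fun m => g m - f m) (by omega : t₁ ≤ t₂) (by omega : t₂ ≤ n₂)]
    have z1 : ∑ m ∈ Finset.Ioc n₁ t₁, (g m - f m) = 0 := by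
      apply Finset.sum_eq_zero
      intro m hm
      rw [Finset.mem_Ioc] at hm
      have : γ' m = γ m := surg_outer _ (Or.inl hm.2)
      simp [hg, hf, this]
    have z2 : ∑ m ∈ Finset.Ioc t₂ n₂, (g m - f m) = 0 := by
      apply Finset.sum_eq_zero
      intro m hm
      rw [Finset.mem_Ioc] at hm
      have : γ' m = γ m := surg_outer _ (Or.inr (le_of_lt hm.1))
      simp [hg, hf, this]
    rw [z1, z2]
    ring
  -- split the window
  have hsplit : ∑ m ∈ Finset.Ioc t₁ t₂, (g m - f m)
      = ∑ m ∈ Finset.Ioc t₁ aa, (g m - f m) + (∑ m ∈ Finset.Ioc aa n, (g m - f m)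
        + ∑ m ∈ Finset.Ioc n (bb - 1), (g m - f m)) + ∑ m ∈ Finset.Ioc (bb - 1) t₂, (g m - f m) := by
    rw [sum_Ioc_consec (fun m => g m - f m) (by omega : aa ≤ n) (by omega : n ≤ bb - 1)]
    rw [sum_Ioc_consec (fun m => g m - f m) (by omega : t₁ ≤ aa) (by omega : aa ≤ bb - 1)]
    rw [sum_Ioc_consec (fun m => g m - f m) (by omega : t₁ ≤ bb - 1) (by omega : bb - 1 ≤ t₂)]
  -- travel-in bound
  have hb1 : -((M₀ + M₁) * ((aa - t₁ : ℤ) : ℝ)) ≤ ∑ m ∈ Finset.Ioc t₁ aa, (g m - f m) := by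
    have : ∀ m ∈ Finset.Ioc t₁ aa, -(M₀ + M₁) ≤ g m - f m := by
      intro m hm
      rw [Finset.mem_Ioc] at hm
      have hgm : -M₀ ≤ g m := contrib_ge hV0 hV1 hM₀ hM01 _ _
      have hfm : f m ≤ M₁ := contrib_le_M₁ hV1 (hz1 m hm.1 (by omega)) _
      linarith
    have := Finset.card_nsmul_le_sum _ _ _ this
    have hcard : ((Finset.Ioc t₁ aa).card : ℝ) = ((aa - t₁ : ℤ) : ℝ) := by
      have h0 : ((Finset.Ioc t₁ aa).card : ℤ) = aa - t₁ := by rw [Int.card_Ioc]; omega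
      exact_mod_cast h0
    rw [nsmul_eq_mul, hcard] at this
    calc -((M₀ + M₁) * ((aa - t₁ : ℤ) : ℝ)) = ((aa - t₁ : ℤ) : ℝ) * (-(M₀ + M₁)) := by ring
      _ ≤ _ := this
  -- travel-out bound
  have hb4 : -((M₀ + M₁) * (((t₂ - bb : ℤ) : ℝ) + 1)) ≤ ∑ m ∈ Finset.Ioc (bb - 1) t₂, (g m - f m) := by
    have : ∀ m ∈ Finset.Ioc (bb - 1) t₂, -(M₀ + M₁) ≤ g m - f m := by
      intro m hm
      rw [Finset.mem_Ioc] at hm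
      rcases eq_or_lt_of_le hm.2 with heq | hlt
      · have : γ' m = γ m := surg_outer _ (Or.inr (by omega))
        have : g m - f m = 0 := by simp [hg, hf, this]
        rw [this]
        linarith
      · have hgm : -M₀ ≤ g m := contrib_ge hV0 hV1 hM₀ hM01 _ _
        have hfm : f m ≤ M₁ := contrib_le_M₁ hV1 (hz2 m (by omega) hlt) _
        linarith
    have := Finset.card_nsmul_le_sum _ _ _ this
    have hcard : ((Finset.Ioc (bb - 1) t₂).card : ℝ) = ((t₂ - bb : ℤ) : ℝ) + 1 := by
      have h0 : ((Finset.Ioc (bb - 1) t₂).card : ℤ) = t₂ - bb + 1 := by rw [Int.card_Ioc]; omega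
      exact_mod_cast h0
    rw [nsmul_eq_mul, hcard] at this
    calc -((M₀ + M₁) * (((t₂ - bb : ℤ) : ℝ) + 1)) = (((t₂ - bb : ℤ) : ℝ) + 1) * (-(M₀ + M₁)) := by ring
      _ ≤ _ := this
  -- left mid bound
  have hb2 : ((n - aa : ℤ) : ℝ) * (lam + Real.log (2 * (d : ℝ) + 1))
      ≤ ∑ m ∈ Finset.Ioc aa n, (g m - f m) := by
    have hterm : ∀ m ∈ Finset.Ioc aa n, xi M₀ M₁ ω m - M₁ ≤ g m - f m := by
      intro m hm
      rw [Finset.mem_Ioc] at hm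
      have hmid : γ' m = gstar d ω m := surg_mid h2 h5 m hm.1 (by omega)
      have hgm : xi M₀ M₁ ω m ≤ g m := by
        rw [hg]
        simp only
        rw [hmid]
        exact contrib_gstar hd hV0 hV1 ω m
      have hfm : f m ≤ M₁ := contrib_le_M₁ hV1 (hz1 m (by omega) hm.2) _
      linarith
    have hsum := Finset.sum_le_sum hterm
    set k : ℕ := (n - aa).toNat with hk
    have hkk : (k : ℤ) = n - aa := by omega
    have hwin := hwinL k (by omega)
    have hIcc : Finset.Icc (n - (k : ℤ) + 1) n = Finset.Ioc aa n := by
      rw [hkk, Ioc_eq_Icc]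
      congr 1
      omega
    rw [hIcc] at hwin
    have hcard : ((Finset.Ioc aa n).card : ℝ) = ((n - aa : ℤ) : ℝ) := by
      have h0 : ((Finset.Ioc aa n).card : ℤ) = n - aa := by rw [Int.card_Ioc]; omega
      exact_mod_cast h0
    have hsum2 : ∑ m ∈ Finset.Ioc aa n, (xi M₀ M₁ ω m - M₁)
        = (∑ m ∈ Finset.Ioc aa n, xi M₀ M₁ ω m) - M₁ * ((n - aa : ℤ) : ℝ) := by
      rw [Finset.sum_sub_distrib, Finset.sum_const, nsmul_eq_mul, hcard]
      ring
    have hkr : (k : ℝ) = ((n - aa : ℤ) : ℝ) := by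
      rw [← hkk]
      push_cast
      ring
    rw [hkr] at hwin
    calc ((n - aa : ℤ) : ℝ) * (lam + Real.log (2 * (d : ℝ) + 1))
        = ((n - aa : ℤ) : ℝ) * (M₁ + lam + Real.log (2 * (d : ℝ) + 1)) - M₁ * ((n - aa : ℤ) : ℝ) := by
          ring
      _ ≤ (∑ m ∈ Finset.Ioc aa n, xi M₀ M₁ ω m) - M₁ * ((n - aa : ℤ) : ℝ) := by linarith
      _ = ∑ m ∈ Finset.Ioc aa n, (xi M₀ M₁ ω m - M₁) := hsum2.symm
      _ ≤ _ := hsum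
  -- right mid bound
  have hb3 : ((bb - 1 - n : ℤ) : ℝ) * (lam + Real.log (2 * (d : ℝ) + 1))
      ≤ ∑ m ∈ Finset.Ioc n (bb - 1), (g m - f m) := by
    have hterm : ∀ m ∈ Finset.Ioc n (bb - 1), xi M₀ M₁ ω m - M₁ ≤ g m - f m := by
      intro m hm
      rw [Finset.mem_Ioc] at hm
      have hmid : γ' m = gstar d ω m := surg_mid h2 h5 m (by omega) (by omega)
      have hgm : xi M₀ M₁ ω m ≤ g m := by
        rw [hg]
        simp only
        rw [hmid]
        exact contrib_gstar hd hV0 hV1 ω m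
      have hfm : f m ≤ M₁ := contrib_le_M₁ hV1 (hz2 m hm.1 (by omega)) _
      linarith
    have hsum := Finset.sum_le_sum hterm
    set k : ℕ := (bb - 1 - n).toNat with hk
    have hkk : (k : ℤ) = bb - 1 - n := by omega
    have hwin := hwinR k (by omega)
    have hIcc : Finset.Icc (n + 1) (n + (k : ℤ)) = Finset.Ioc n (bb - 1) := by
      rw [hkk, Ioc_eq_Icc]
      congr 1
      omega
    rw [hIcc] at hwin
    have hcard : ((Finset.Ioc n (bb - 1)).card : ℝ) = ((bb - 1 - n : ℤ) : ℝ) := by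
      have h0 : ((Finset.Ioc n (bb - 1)).card : ℤ) = bb - 1 - n := by rw [Int.card_Ioc]; omega
      exact_mod_cast h0
    have hsum2 : ∑ m ∈ Finset.Ioc n (bb - 1), (xi M₀ M₁ ω m - M₁)
        = (∑ m ∈ Finset.Ioc n (bb - 1), xi M₀ M₁ ω m) - M₁ * ((bb - 1 - n : ℤ) : ℝ) := by
      rw [Finset.sum_sub_distrib, Finset.sum_const, nsmul_eq_mul, hcard]
      ring
    have hkr : (k : ℝ) = ((bb - 1 - n : ℤ) : ℝ) := by
      rw [← hkk]
      push_cast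
      ring
    rw [hkr] at hwin
    calc ((bb - 1 - n : ℤ) : ℝ) * (lam + Real.log (2 * (d : ℝ) + 1))
        = ((bb - 1 - n : ℤ) : ℝ) * (M₁ + lam + Real.log (2 * (d : ℝ) + 1))
          - M₁ * ((bb - 1 - n : ℤ) : ℝ) := by ring
      _ ≤ (∑ m ∈ Finset.Ioc n (bb - 1), xi M₀ M₁ ω m) - M₁ * ((bb - 1 - n : ℤ) : ℝ) := by linarith
      _ = ∑ m ∈ Finset.Ioc n (bb - 1), (xi M₀ M₁ ω m - M₁) := hsum2.symm
      _ ≤ _ := hsum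
  rw [hPhiγ, hPhiγ']
  have := houter
  rw [hsplit] at this
  linarith [hb1, hb2, hb3, hb4]

/-! ### Z as a finite sum -/

section Zsum

variable {d : ℕ} {V : X d → ℝ} {ω : ℤ → Bool} {n₁ n₂ : ℤ} {x₁ x₂ : X d}

lemma sum_le_Z (h12 : n₁ ≤ n₂) (t : Finset (ℤ → X d))
    (ht : ∀ γ ∈ t, γ ∈ PathSet d n₁ n₂ x₁ x₂) :
    ∑ γ ∈ t, Real.exp (Phi V ω n₁ n₂ γ) ≤ Z V ω n₁ n₂ x₁ x₂ := by
  classical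
  haveI : Fintype ↥(PathSet d n₁ n₂ x₁ x₂) := (pathSet_finite d n₁ n₂ h12 x₁ x₂).fintype
  have hZ : Z V ω n₁ n₂ x₁ x₂
      = ∑' γ : ↥(PathSet d n₁ n₂ x₁ x₂), Real.exp (Phi V ω n₁ n₂ γ.1) := rfl
  rw [hZ, tsum_fintype]
  set ψ : {γ // γ ∈ t} → ↥(PathSet d n₁ n₂ x₁ x₂) := fun γ => ⟨γ.1, ht γ.1 γ.2⟩ with hψ
  have hinj : Function.Injective ψ := by
    intro a b hab
    have h' : (ψ a).1 = (ψ b).1 := by rw [hab]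
    exact Subtype.ext h' 
  calc ∑ γ ∈ t, Real.exp (Phi V ω n₁ n₂ γ)
      = ∑ γ ∈ t.attach, Real.exp (Phi V ω n₁ n₂ γ.1) := (Finset.sum_attach _ _).symm
    _ = ∑ γ ∈ t.attach.map ⟨ψ, hinj⟩, Real.exp (Phi V ω n₁ n₂ γ.1) := by
        rw [Finset.sum_map]
        rfl
    _ ≤ ∑ γ : ↥(PathSet d n₁ n₂ x₁ x₂), Real.exp (Phi V ω n₁ n₂ γ.1) :=
        Finset.sum_le_univ_sum_of_nonneg (fun γ => (Real.exp_pos _).le)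

lemma exp_le_Z (h12 : n₁ ≤ n₂) {γ : ℤ → X d} (hγ : γ ∈ PathSet d n₁ n₂ x₁ x₂) :
    Real.exp (Phi V ω n₁ n₂ γ) ≤ Z V ω n₁ n₂ x₁ x₂ := by
  have := sum_le_Z (V := V) (ω := ω) h12 {γ} (by simpa using hγ)
  simpa using this

lemma Z_pos (h12 : n₁ ≤ n₂) {γ : ℤ → X d} (hγ : γ ∈ PathSet d n₁ n₂ x₁ x₂) :
    0 < Z V ω n₁ n₂ x₁ x₂ :=
  lt_of_lt_of_le (Real.exp_pos _) (exp_le_Z h12 hγ)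

lemma Z_nonneg (h12 : n₁ ≤ n₂) : 0 ≤ Z (d := d) V ω n₁ n₂ x₁ x₂ := by
  classical
  haveI : Fintype ↥(PathSet d n₁ n₂ x₁ x₂) := (pathSet_finite d n₁ n₂ h12 x₁ x₂).fintype
  have hZ : Z V ω n₁ n₂ x₁ x₂
      = ∑' γ : ↥(PathSet d n₁ n₂ x₁ x₂), Real.exp (Phi V ω n₁ n₂ γ.1) := rfl
  rw [hZ, tsum_fintype]
  exact Finset.sum_nonneg fun γ _ => (Real.exp_pos _).le

end Zsum

/-! ### counting paths in a window -/

noncomputable def SF (d : ℕ) : Finset (X d) :=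
  insert 0 ((Finset.univ : Finset (Fin d × Bool)).image
    (fun p => Function.update (0 : X d) p.1 (if p.2 then 1 else -1)))

lemma card_SF (d : ℕ) : (SF d).card ≤ 2 * d + 1 := by
  calc (SF d).card ≤ ((Finset.univ : Finset (Fin d × Bool)).image
      (fun p : Fin d × Bool => Function.update (0 : X d) p.1 (if p.2 then 1 else -1))).card + 1 :=
        Finset.card_insert_le _ _
    _ ≤ (Finset.univ : Finset (Fin d × Bool)).card + 1 :=
        Nat.add_le_add_right (Finset.card_image_le) 1
    _ = 2 * d + 1 := by
        rw [Finset.card_univ, Fintype.card_prod, Fintype.card_fin, Fintype.card_bool]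
        omega

lemma step_mem_SF {d : ℕ} {x y : X d} (h : stepOK x y) : y - x ∈ SF d := by
  classical
  set v : X d := y - x with hv
  have hvs : ∑ i, (v i).natAbs ≤ 1 := by
    have : ∀ i, v i = y i - x i := fun i => rfl
    calc (∑ i, (v i).natAbs) = ∑ i, (y i - x i).natAbs :=
        Finset.sum_congr rfl fun i _ => by rw [this i]
      _ ≤ 1 := h
  by_cases hv0 : v = 0
  · rw [SF]
    rw [hv0]
    exact Finset.mem_insert_self _ _
  · obtain ⟨i, hi⟩ := exists_ne_of_ne_zero hv0
    have hi1 : (v i).natAbs = 1 := by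
      have h1 : 1 ≤ (v i).natAbs := by omega
      have h2 : (v i).natAbs ≤ ∑ j, (v j).natAbs :=
        Finset.single_le_sum (f := fun j => (v j).natAbs) (fun _ _ => Nat.zero_le _)
          (Finset.mem_univ i)
      omega
    have hothers : ∀ j, j ≠ i → v j = 0 := by
      intro j hj
      have hsum : (v i).natAbs + ∑ k ∈ Finset.univ.erase i, (v k).natAbs
          = ∑ k, (v k).natAbs :=
        Finset.add_sum_erase _ (fun k => (v k).natAbs) (Finset.mem_univ i)
      have hz : ∑ k ∈ Finset.univ.erase i, (v k).natAbs = 0 := by omega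
      have := (Finset.sum_eq_zero_iff (s := Finset.univ.erase i)
        (f := fun k => (v k).natAbs)).mp hz j (Finset.mem_erase.mpr ⟨hj, Finset.mem_univ j⟩)
      omega
    have hvi : v i = 1 ∨ v i = -1 := by omega
    rw [SF]
    apply Finset.mem_insert_of_mem
    rw [Finset.mem_image]
    refine ⟨⟨i, v i = 1⟩, Finset.mem_univ _, ?_⟩
    funext j
    by_cases hj : j = i
    · subst hj
      rw [Function.update_self]
      rcases hvi with h' | h' <;> simp [h']
    · rw [Function.update_of_ne hj]
      exact (hothers j hj).symm

lemma fiber_card {d : ℕ} {ω : ℤ → Bool} {n₁ n₂ t₁ t₂ aa bb : ℤ}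
    (h1 : n₁ ≤ t₁) (h : t₁ < t₂) (h6 : t₂ ≤ n₂) (γ'' : ℤ → X d) (s : Finset (ℤ → X d))
    (hstep : ∀ γ ∈ s, Adm n₁ n₂ γ)
    (hs : ∀ γ ∈ s, surg ω t₁ t₂ aa bb γ = γ'') :
    s.card ≤ (2 * d + 1) ^ (t₂ - t₁ - 1).toNat := by
  classical
  set M := (t₂ - t₁ - 1).toNat with hM
  set J : (ℤ → X d) → (Fin M → {v // v ∈ SF d}) := fun γ j =>
    if hj : stepOK (γ (t₁ + (j : ℕ))) (γ (t₁ + (j : ℕ) + 1)) then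
      ⟨γ (t₁ + (j : ℕ) + 1) - γ (t₁ + (j : ℕ)), step_mem_SF hj⟩
    else ⟨0, Finset.mem_insert_self _ _⟩ with hJ
  have hinj : Set.InjOn J s := by
    intro γ₁ hγ₁ γ₂ hγ₂ hJeq
    have houter : ∀ m : ℤ, m ≤ t₁ ∨ t₂ ≤ m → γ₁ m = γ₂ m := by
      intro m hm
      have e1 : γ₁ m = γ'' m := by rw [← hs γ₁ hγ₁]; exact (surg_outer m hm).symm
      have e2 : γ₂ m = γ'' m := by rw [← hs γ₂ hγ₂]; exact (surg_outer m hm).symm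
      rw [e1, e2]
    have hstep1 := hstep γ₁ hγ₁
    have hstep2 := hstep γ₂ hγ₂
    have hin : ∀ m : ℤ, t₁ ≤ m → m ≤ t₂ - 1 → γ₁ m = γ₂ m := by
      intro m hm
      refine Int.le_induction
        (motive := fun m _ => m ≤ t₂ - 1 → γ₁ m = γ₂ m) ?_ ?_ m hm
      · intro _
        exact houter t₁ (Or.inl (le_refl _))
      · intro m hm ih hm2
        have ihm := ih (by omega)
        have hjnat : ((m - t₁).toNat : ℤ) = m - t₁ := Int.toNat_of_nonneg (by omega)
        have hjM : (m - t₁).toNat < M := by omega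
        set j : Fin M := ⟨(m - t₁).toNat, hjM⟩ with hj
        have hjj : t₁ + ((j : ℕ) : ℤ) = m := by
          rw [hj]
          simp only
          omega
        have hs1 : stepOK (γ₁ (t₁ + (j : ℕ))) (γ₁ (t₁ + (j : ℕ) + 1)) := by
          rw [hjj]
          exact hstep1 m (by omega) (by omega)
        have hs2 : stepOK (γ₂ (t₁ + (j : ℕ))) (γ₂ (t₁ + (j : ℕ) + 1)) := by
          rw [hjj]
          exact hstep2 m (by omega) (by omega)
        have := congrFun hJeq j
        rw [hJ] at this
        simp only [dif_pos hs1, dif_pos hs2] at this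
        have hval : γ₁ (t₁ + (j : ℕ) + 1) - γ₁ (t₁ + (j : ℕ))
            = γ₂ (t₁ + (j : ℕ) + 1) - γ₂ (t₁ + (j : ℕ)) := congrArg Subtype.val this
        rw [hjj] at hval
        rw [ihm] at hval
        exact sub_left_inj.mp hval
    funext m
    rcases le_or_gt m t₁ with hm | hm
    · exact houter m (Or.inl hm)
    · rcases le_or_gt t₂ m with hm' | hm'
      · exact houter m (Or.inr hm')
      · exact hin m (by omega) (by omega)
  calc s.card ≤ (Finset.univ : Finset (Fin M → {v // v ∈ SF d})).card :=
      Finset.card_le_card_of_injOn J (fun _ _ => Finset.mem_univ _) hinj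
    _ = (SF d).card ^ M := by
        rw [Finset.card_univ, Fintype.card_fun, Fintype.card_coe, Fintype.card_fin]
    _ ≤ (2 * d + 1) ^ M := Nat.pow_le_pow_left (card_SF d) M

/-! ### the core estimate -/

lemma l1_zero {d : ℕ} : l1 (0 : X d) = 0 := by simp [l1]

set_option maxHeartbeats 1000000 in
lemma core_bound {d : ℕ} (hd : 1 ≤ d) {M₀ M₁ lam : ℝ} {V : X d → ℝ} {ω : ℤ → Bool}
    {n₁ n₂ n : ℤ} {r : ℕ} {x₁ x₂ : X d}
    (hM₀ : 0 ≤ M₀) (hM₁ : 0 ≤ M₁) (hM01 : M₁ ≤ M₀) (hlam : 0 < lam)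
    (hV0 : V 0 = M₀) (hV1 : ∀ x : X d, x ≠ 0 → |V x| ≤ M₁)
    (hr : 1 ≤ r)
    (hwinR : ∀ k : ℕ, r ≤ k →
      (k : ℝ) * (M₁ + lam + Real.log (2 * (d : ℝ) + 1)) <
        ∑ j ∈ Finset.Icc (n + 1) (n + k), xi M₀ M₁ ω j)
    (hwinL : ∀ k : ℕ, r ≤ k →
      (k : ℝ) * (M₁ + lam + Real.log (2 * (d : ℝ) + 1)) <
        ∑ j ∈ Finset.Icc (n - k + 1) n, xi M₀ M₁ ω j)
    (hg1 : ((d : ℤ) * r + r + 1) ≤ n - n₁)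
    (hg2 : ((d : ℤ) * r + r + 2) ≤ n₂ - n)
    (hg3 : lam * (r + 1) + (Real.log (2 * (d : ℝ) + 1) + M₀ + M₁) * ((d : ℝ) * r)
      ≤ lam * (((n : ℝ) - n₁) - (d : ℝ) * r))
    (hg4 : lam * r + (Real.log (2 * (d : ℝ) + 1) + M₀ + M₁) * ((d : ℝ) * r)
      ≤ lam * (((n₂ : ℝ) - n) - (d : ℝ) * r - 1))
    (hx₁ : nm x₁ ≤ r) (hx₂ : nm x₂ ≤ r) (h12 : n₁ ≤ n₂) :
    ∑ γ ∈ (pathSet_finite d n₁ n₂ h12 x₁ x₂).toFinset.filter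
        (fun γ => r < nm (γ n)), Real.exp (Phi V ω n₁ n₂ γ)
      ≤ ((1 + 1 / (1 - Real.exp (-lam)))^2 * Real.exp (M₀ + M₁))
          * Real.exp (-2 * lam * r) * Z V ω n₁ n₂ x₁ x₂ := by
  classical
  have hdr0 : (0 : ℤ) ≤ (d : ℤ) * r := by positivity
  set logL : ℝ := Real.log (2 * (d : ℝ) + 1) with hlogL
  have hlogL0 : 0 ≤ logL := by
    rw [hlogL]
    apply Real.log_nonneg
    have : (0 : ℝ) ≤ (d : ℝ) := Nat.cast_nonneg d
    linarith
  set ρ : ℝ := Real.exp (-lam) with hρ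
  have hρ1 : ρ < 1 := by rw [hρ, Real.exp_lt_one_iff]; linarith
  have hρ0 : 0 < ρ := Real.exp_pos _
  have hρden : 0 < 1 - ρ := by linarith
  set ZF := (pathSet_finite d n₁ n₂ h12 x₁ x₂).toFinset with hZF
  set Bad := ZF.filter (fun γ => r < nm (γ n)) with hBad
  set Tl : ℤ → ℤ := fun t₁ => if t₁ = n₁ then ((d : ℤ) * r) else 0 with hTl
  set Tr : ℤ → ℤ := fun t₂ => if t₂ = n₂ then ((d : ℤ) * r) else 0 with hTr
  set A : ℤ → ℤ := fun t₁ => t₁ + Tl t₁ with hA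
  set B : ℤ → ℤ := fun t₂ => t₂ - Tr t₂ with hB
  set H : (ℤ → X d) → (ℤ × ℤ) × (ℤ → X d) := fun γ =>
    ((tau1 n₁ n γ, tau2 n n₂ γ),
      surg ω (tau1 n₁ n γ) (tau2 n n₂ γ) (A (tau1 n₁ n γ)) (B (tau2 n n₂ γ)) γ) with hH
  set gridL := Finset.Icc n₁ (n - r - 1) with hgridL
  set gridR := Finset.Icc (n + r + 1) n₂ with hgridR
  set AL : ℤ → ℝ := fun t₁ =>
    Real.exp (((Tl t₁ : ℤ) : ℝ) * (logL + M₀ + M₁) - lam * (((n - A t₁ : ℤ) : ℝ))) with hAL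
  set AR : ℤ → ℝ := fun t₂ =>
    Real.exp (((Tr t₂ : ℤ) : ℝ) * (logL + M₀ + M₁) - lam * (((B t₂ - 1 - n : ℤ) : ℝ))) with hAR
  have hBadFacts : ∀ γ ∈ Bad, γ ∈ PathSet d n₁ n₂ x₁ x₂ ∧ r < nm (γ n) := by
    intro γ hγ
    rw [hBad, Finset.mem_filter, hZF, Set.Finite.mem_toFinset] at hγ
    exact hγ
  -- grid membership and surgery facts for each bad path
  have hKey : ∀ γ ∈ Bad,
      (tau1 n₁ n γ ∈ gridL ∧ tau2 n n₂ γ ∈ gridR) ∧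
      (H γ).2 ∈ PathSet d n₁ n₂ x₁ x₂ ∧
      Real.exp (Phi V ω n₁ n₂ γ) ≤
        (AL (tau1 n₁ n γ) * AR (tau2 n n₂ γ) * Real.exp (M₀ + M₁))
          * Real.exp (- ((((tau2 n n₂ γ) - (tau1 n₁ n γ) - 1 : ℤ) : ℝ) * logL))
          * Real.exp (Phi V ω n₁ n₂ ((H γ).2)) := by
    intro γ hγ
    obtain ⟨⟨hAdm, hFro, hend1, hend2⟩, hnm⟩ := hBadFacts γ hγ
    set t₁ := tau1 n₁ n γ with ht₁
    set t₂ := tau2 n n₂ γ with ht₂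
    obtain ⟨⟨ht₁1, ht₁2⟩, ht₁z, ht₁ne⟩ := tau1_spec n₁ n γ (by omega)
    obtain ⟨⟨ht₂1, ht₂2⟩, ht₂z, ht₂ne⟩ := tau2_spec n n₂ γ (by omega)
    have hgm1 : t₁ ≤ n - r - 1 := by
      rcases ht₁z with hz | hz
      · have := nm_le_along hAdm (u := t₁) (by omega) n (by omega) (by omega)
        rw [hz, nm_eq_zero_iff.mpr rfl] at this
        omega
      · omega
    have hgm2 : n + r + 1 ≤ t₂ := by
      rcases ht₂z with hz | hz
      · have := nm_le_along' hAdm (u := n) (by omega) t₂ (by omega) (by omega)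
        rw [hz, nm_eq_zero_iff.mpr rfl] at this
        omega
      · omega
    have hTlv : Tl t₁ = if t₁ = n₁ then ((d : ℤ) * r) else 0 := by rw [hTl]
    have hTrv : Tr t₂ = if t₂ = n₂ then ((d : ℤ) * r) else 0 := by rw [hTr]
    have hAv : A t₁ = t₁ + Tl t₁ := by rw [hA]
    have hBv : B t₂ = t₂ - Tr t₂ := by rw [hB]
    have hTl0 : 0 ≤ Tl t₁ ∧ Tl t₁ ≤ (d : ℤ) * r := by
      rw [hTlv]; split_ifs
      · exact ⟨hdr0, le_refl _⟩
      · exact ⟨le_refl 0, hdr0⟩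
    have hTr0 : 0 ≤ Tr t₂ ∧ Tr t₂ ≤ (d : ℤ) * r := by
      rw [hTrv]; split_ifs
      · exact ⟨hdr0, le_refl _⟩
      · exact ⟨le_refl 0, hdr0⟩
    have haa : (r : ℤ) + 1 ≤ n - A t₁ := by
      rw [hAv, hTlv]
      split_ifs with h
      · omega
      · omega
    have hbb : (r : ℤ) ≤ B t₂ - 1 - n := by
      rw [hBv, hTrv]
      split_ifs with h
      · omega
      · omega
    have hl1γ : (l1 (γ t₁) : ℤ) ≤ A t₁ - t₁ := by
      have hAt : A t₁ - t₁ = Tl t₁ := by rw [hAv]; ring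
      rw [hAt]
      by_cases ht : t₁ = n₁
      · rw [hTlv, if_pos ht]
        have h1 : γ t₁ = x₁ := by rw [ht, hend1]
        rw [h1]
        have h2 : l1 x₁ ≤ d * r := le_trans (l1_le_d_mul_nm x₁) (Nat.mul_le_mul le_rfl hx₁)
        exact_mod_cast h2
      · rcases ht₁z with hz | hz
        · rw [hz, l1_zero, hTlv, if_neg ht]
          simp
        · exact absurd hz ht
    have hl2γ : (l1 (γ t₂) : ℤ) ≤ t₂ - B t₂ := by
      have hBt : t₂ - B t₂ = Tr t₂ := by rw [hBv]; ring
      rw [hBt]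
      by_cases ht : t₂ = n₂
      · rw [hTrv, if_pos ht]
        have h1 : γ t₂ = x₂ := by rw [ht, hend2]
        rw [h1]
        have h2 : l1 x₂ ≤ d * r := le_trans (l1_le_d_mul_nm x₂) (Nat.mul_le_mul le_rfl hx₂)
        exact_mod_cast h2
      · rcases ht₂z with hz | hz
        · rw [hz, l1_zero, hTrv, if_neg ht]
          simp
        · exact absurd hz ht
    have hO1 : t₁ ≤ A t₁ := by omega
    have hO2 : A t₁ + 1 < B t₂ := by omega
    have hO3 : B t₂ ≤ t₂ := by omega
    have hsurgmem : (H γ).2 ∈ PathSet d n₁ n₂ x₁ x₂ := by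
      have hHval : (H γ).2 = surg ω t₁ t₂ (A t₁) (B t₂) γ := rfl
      rw [hHval]
      refine ⟨surg_adm hd hAdm ht₁1 hO1 hO2 hO3 ht₂2 hl1γ hl2γ,
        surg_frozen hFro ht₁1 ht₂2, ?_, ?_⟩
      · rw [(surg_ends ht₁1 ht₂2).1, hend1]
      · rw [(surg_ends ht₁1 ht₂2).2, hend2]
    refine ⟨⟨?_, ?_⟩, hsurgmem, ?_⟩
    · rw [hgridL, Finset.mem_Icc]; exact ⟨ht₁1, hgm1⟩
    · rw [hgridR, Finset.mem_Icc]; exact ⟨hgm2, ht₂2⟩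
    · have hgain := phi_gain hd hV0 hV1 hM₀ hM₁ hM01 hwinR hwinL ht₁1 hO1
        (by omega : (r : ℤ) ≤ n - A t₁) (by omega : (r : ℤ) ≤ B t₂ - 1 - n)
        hO3 ht₂2 hr ht₁ne (fun m hm1 hm2 => ht₂ne m hm1 hm2)
      have hHval : (H γ).2 = surg ω t₁ t₂ (A t₁) (B t₂) γ := rfl
      rw [hHval]
      simp only [hAL, hAR]
      rw [← Real.exp_add, ← Real.exp_add, ← Real.exp_add, ← Real.exp_add]
      rw [Real.exp_le_exp]
      have harith : ((t₂ - t₁ - 1 : ℤ) : ℝ)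
          = ((Tl t₁ : ℤ) : ℝ) + ((Tr t₂ : ℤ) : ℝ) + ((n - A t₁ : ℤ) : ℝ)
            + ((B t₂ - 1 - n : ℤ) : ℝ) := by
        rw [hAv, hBv]
        push_cast
        ring
      have hAt : ((A t₁ - t₁ : ℤ) : ℝ) = ((Tl t₁ : ℤ) : ℝ) := by
        rw [hAv]; push_cast; ring
      have hBt : ((t₂ - B t₂ : ℤ) : ℝ) = ((Tr t₂ : ℤ) : ℝ) := by
        rw [hBv]; push_cast; ring
      rw [hAt, hBt] at hgain
      rw [harith]
      push_cast at hgain ⊢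
      linarith [hgain]
  -- fiberwise decomposition
  have hmaps : ∀ γ ∈ Bad, H γ ∈ (gridL ×ˢ gridR) ×ˢ ZF := by
    intro γ hγ
    obtain ⟨hmemL, hmemR⟩ := (hKey γ hγ).1
    rw [Finset.mem_product, Finset.mem_product]
    refine ⟨⟨hmemL, hmemR⟩, ?_⟩
    rw [hZF, Set.Finite.mem_toFinset]
    exact (hKey γ hγ).2.1
  rw [← Finset.sum_fiberwise_of_maps_to hmaps (fun γ => Real.exp (Phi V ω n₁ n₂ γ))]
  -- per-fiber bound
  have hfiber : ∀ q ∈ (gridL ×ˢ gridR) ×ˢ ZF,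
      ∑ γ ∈ Bad.filter (fun γ => H γ = q), Real.exp (Phi V ω n₁ n₂ γ)
        ≤ AL q.1.1 * AR q.1.2 * Real.exp (M₀ + M₁) * Real.exp (Phi V ω n₁ n₂ q.2) := by
    intro q hq
    rw [Finset.mem_product, Finset.mem_product] at hq
    obtain ⟨⟨hq1, hq2⟩, hq3⟩ := hq
    rw [hgridL, Finset.mem_Icc] at hq1
    rw [hgridR, Finset.mem_Icc] at hq2
    set s := Bad.filter (fun γ => H γ = q) with hsdef
    have hq12 : q.1.1 < q.1.2 := by omega
    have hcnt : s.card ≤ (2 * d + 1) ^ (q.1.2 - q.1.1 - 1).toNat := by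
      refine fiber_card (ω := ω) (aa := A q.1.1) (bb := B q.1.2) hq1.1 hq12 hq2.2 q.2 s ?_ ?_
      · intro γ hγ
        exact ((hBadFacts γ (Finset.mem_filter.mp hγ).1).1).1
      · intro γ hγ
        have hHeq : H γ = q := (Finset.mem_filter.mp hγ).2
        have e1 : tau1 n₁ n γ = q.1.1 := by rw [← hHeq]
        have e2 : tau2 n n₂ γ = q.1.2 := by rw [← hHeq]
        have e3 : surg ω (tau1 n₁ n γ) (tau2 n n₂ γ) (A (tau1 n₁ n γ)) (B (tau2 n n₂ γ)) γ
            = q.2 := by rw [show surg ω (tau1 n₁ n γ) (tau2 n n₂ γ) (A (tau1 n₁ n γ))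
              (B (tau2 n n₂ γ)) γ = (H γ).2 from rfl, hHeq]
        rw [e1, e2] at e3
        exact e3
    have hterm : ∀ γ ∈ s, Real.exp (Phi V ω n₁ n₂ γ)
        ≤ (AL q.1.1 * AR q.1.2 * Real.exp (M₀ + M₁))
          * Real.exp (- (((q.1.2 - q.1.1 - 1 : ℤ) : ℝ) * logL))
          * Real.exp (Phi V ω n₁ n₂ q.2) := by
      intro γ hγ
      have hγBad : γ ∈ Bad := (Finset.mem_filter.mp hγ).1
      have hHeq : H γ = q := (Finset.mem_filter.mp hγ).2
      have hray := (hKey γ hγBad).2.2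
      have e1 : tau1 n₁ n γ = q.1.1 := by rw [← hHeq]
      have e2 : tau2 n n₂ γ = q.1.2 := by rw [← hHeq]
      have e3 : (H γ).2 = q.2 := by rw [hHeq]
      rw [e1, e2, e3] at hray
      exact hray
    have hpow : ((2 * d + 1 : ℕ) ^ (q.1.2 - q.1.1 - 1).toNat : ℝ)
        = Real.exp ((((q.1.2 - q.1.1 - 1 : ℤ) : ℝ)) * logL) := by
      have hpos : (0 : ℝ) < 2 * (d : ℝ) + 1 := by positivity
      have h1 : ((2 * d + 1 : ℕ) ^ (q.1.2 - q.1.1 - 1).toNat : ℝ)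
          = (2 * (d : ℝ) + 1) ^ (q.1.2 - q.1.1 - 1).toNat := by
        push_cast; ring
      have h2 : (((q.1.2 - q.1.1 - 1).toNat : ℕ) : ℝ) = ((q.1.2 - q.1.1 - 1 : ℤ) : ℝ) := by
        exact_mod_cast Int.toNat_of_nonneg (by omega : (0 : ℤ) ≤ q.1.2 - q.1.1 - 1)
      rw [h1, ← Real.exp_log hpos, ← Real.exp_nat_mul, h2, hlogL]
    calc ∑ γ ∈ s, Real.exp (Phi V ω n₁ n₂ γ)
        ≤ s.card • ((AL q.1.1 * AR q.1.2 * Real.exp (M₀ + M₁))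
            * Real.exp (- (((q.1.2 - q.1.1 - 1 : ℤ) : ℝ) * logL))
            * Real.exp (Phi V ω n₁ n₂ q.2)) := Finset.sum_le_card_nsmul _ _ _ hterm
      _ ≤ ((2 * d + 1 : ℕ) ^ (q.1.2 - q.1.1 - 1).toNat : ℝ)
            * ((AL q.1.1 * AR q.1.2 * Real.exp (M₀ + M₁))
            * Real.exp (- (((q.1.2 - q.1.1 - 1 : ℤ) : ℝ) * logL))
            * Real.exp (Phi V ω n₁ n₂ q.2)) := by
          rw [nsmul_eq_mul]
          apply mul_le_mul_of_nonneg_right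
          · exact_mod_cast Nat.cast_le.mpr hcnt
          · positivity
      _ = AL q.1.1 * AR q.1.2 * Real.exp (M₀ + M₁) * Real.exp (Phi V ω n₁ n₂ q.2) := by
          rw [hpow]
          have hcancel : Real.exp ((((q.1.2 - q.1.1 - 1 : ℤ) : ℝ)) * logL)
              * Real.exp (- (((q.1.2 - q.1.1 - 1 : ℤ) : ℝ) * logL)) = 1 := by
            rw [← Real.exp_add]
            simp
          calc Real.exp ((((q.1.2 - q.1.1 - 1 : ℤ) : ℝ)) * logL)
              * (AL q.1.1 * AR q.1.2 * Real.exp (M₀ + M₁)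
                * Real.exp (- (((q.1.2 - q.1.1 - 1 : ℤ) : ℝ) * logL))
                * Real.exp (Phi V ω n₁ n₂ q.2))
              = (Real.exp ((((q.1.2 - q.1.1 - 1 : ℤ) : ℝ)) * logL)
                  * Real.exp (- (((q.1.2 - q.1.1 - 1 : ℤ) : ℝ) * logL)))
                * (AL q.1.1 * AR q.1.2 * Real.exp (M₀ + M₁)
                  * Real.exp (Phi V ω n₁ n₂ q.2)) := by ring
            _ = AL q.1.1 * AR q.1.2 * Real.exp (M₀ + M₁)
                * Real.exp (Phi V ω n₁ n₂ q.2) := by rw [hcancel, one_mul]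
  -- assemble
  have hALn₁ : AL n₁ ≤ Real.exp (-lam * ((r : ℝ) + 1)) := by
    simp only [hAL]
    rw [Real.exp_le_exp]
    have hTlv : Tl n₁ = (d : ℤ) * r := by rw [hTl]; simp
    have hAv : A n₁ = n₁ + Tl n₁ := by rw [hA]
    rw [hTlv] at hAv
    rw [hTlv, hAv]
    push_cast
    nlinarith [hg3]
  have hARn₂ : AR n₂ ≤ Real.exp (-lam * (r : ℝ)) := by
    simp only [hAR]
    rw [Real.exp_le_exp]
    have hTrv : Tr n₂ = (d : ℤ) * r := by rw [hTr]; simp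
    have hBv : B n₂ = n₂ - Tr n₂ := by rw [hB]
    rw [hTrv] at hBv
    rw [hTrv, hBv]
    push_cast
    nlinarith [hg4]
  have hALsum : ∑ t₁ ∈ gridL, AL t₁ ≤ (1 + 1 / (1 - ρ)) * Real.exp (-lam * ((r : ℝ) + 1)) := by
    rw [hgridL, Finset.Icc_eq_cons_Ioc (by omega : n₁ ≤ n - r - 1), Finset.sum_cons]
    have hrest : ∑ t₁ ∈ Finset.Ioc n₁ (n - r - 1), AL t₁
        ≤ Real.exp (-lam * ((r : ℝ) + 1)) / (1 - ρ) := by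
      have heq : ∀ t₁ ∈ Finset.Ioc n₁ (n - r - 1), AL t₁
          = Real.exp (-lam * ((n : ℝ) - (t₁ : ℝ))) := by
        intro t₁ ht
        rw [Finset.mem_Ioc] at ht
        simp only [hAL]
        congr 1
        have hTlv : Tl t₁ = 0 := by rw [hTl]; simp only; rw [if_neg (by omega)]
        have hAv : A t₁ = t₁ + Tl t₁ := by rw [hA]
        rw [hTlv] at hAv
        rw [hTlv, hAv]
        push_cast
        ring
      rw [Finset.sum_congr rfl heq]
      have := geo_sum hlam n₁ (n - r - 1) (by omega) n (by omega)
      calc ∑ t₁ ∈ Finset.Ioc n₁ (n - r - 1), Real.exp (-lam * ((n : ℝ) - (t₁ : ℝ)))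
          ≤ Real.exp (-lam * ((n : ℝ) - ((n - r - 1 : ℤ) : ℝ))) / (1 - ρ) := this
        _ = Real.exp (-lam * ((r : ℝ) + 1)) / (1 - ρ) := by
            congr 2
            push_cast
            ring
    have hALn₁' := hALn₁
    have h1ρ : 0 < 1 - ρ := hρden
    calc AL n₁ + ∑ t₁ ∈ Finset.Ioc n₁ (n - r - 1), AL t₁
        ≤ Real.exp (-lam * ((r : ℝ) + 1)) + Real.exp (-lam * ((r : ℝ) + 1)) / (1 - ρ) := by
          exact add_le_add hALn₁' hrest
      _ = (1 + 1 / (1 - ρ)) * Real.exp (-lam * ((r : ℝ) + 1)) := by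
          field_simp
  have hARsum : ∑ t₂ ∈ gridR, AR t₂ ≤ (1 + 1 / (1 - ρ)) * Real.exp (-lam * (r : ℝ)) := by
    rw [hgridR, Finset.Icc_eq_cons_Ico (by omega : n + r + 1 ≤ n₂), Finset.sum_cons]
    have hrest : ∑ t₂ ∈ Finset.Ico (n + r + 1) n₂, AR t₂
        ≤ Real.exp (-lam * (r : ℝ)) / (1 - ρ) := by
      have heq : ∀ t₂ ∈ Finset.Ico (n + r + 1) n₂, AR t₂
          = Real.exp (-lam * ((t₂ : ℝ) - ((n : ℝ) + 1))) := by
        intro t₂ ht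
        rw [Finset.mem_Ico] at ht
        simp only [hAR]
        congr 1
        have hTrv : Tr t₂ = 0 := by rw [hTr]; simp only; rw [if_neg (by omega)]
        have hBv : B t₂ = t₂ - Tr t₂ := by rw [hB]
        rw [hTrv] at hBv
        rw [hTrv, hBv]
        push_cast
        ring
      rw [Finset.sum_congr rfl heq]
      have hmap : ∑ t₂ ∈ Finset.Ico (n + r + 1) n₂,
          Real.exp (-lam * ((t₂ : ℝ) - ((n : ℝ) + 1)))
          = ∑ s ∈ Finset.Ioc (-n₂) (-(n + r + 1)),
            Real.exp (-lam * ((((-(n + 1) : ℤ)) : ℝ) - (s : ℝ))) := by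
        refine Finset.sum_nbij' (fun t => -t) (fun s => -s) ?_ ?_ ?_ ?_ ?_
        · intro t ht
          rw [Finset.mem_Ico] at ht
          show -t ∈ Finset.Ioc (-n₂) (-(n + r + 1))
          rw [Finset.mem_Ioc]
          omega
        · intro s hs
          rw [Finset.mem_Ioc] at hs
          show -s ∈ Finset.Ico (n + r + 1) n₂
          rw [Finset.mem_Ico]
          omega
        · intro t _
          show -(-t) = t
          ring
        · intro s _
          show -(-s) = s
          ring
        · intro t ht
          show Real.exp (-lam * ((t : ℝ) - ((n : ℝ) + 1)))
            = Real.exp (-lam * ((((-(n + 1) : ℤ)) : ℝ) - (((-t : ℤ)) : ℝ)))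
          congr 1
          push_cast
          ring
      rw [hmap]
      have := geo_sum hlam (-n₂) (-(n + r + 1)) (by omega) (-(n + 1)) (by omega)
      calc ∑ s ∈ Finset.Ioc (-n₂) (-(n + r + 1)),
            Real.exp (-lam * ((((-(n + 1) : ℤ)) : ℝ) - (s : ℝ)))
          ≤ Real.exp (-lam * ((((-(n + 1) : ℤ)) : ℝ) - ((-(n + r + 1) : ℤ) : ℝ))) / (1 - ρ) :=
            this
        _ = Real.exp (-lam * (r : ℝ)) / (1 - ρ) := by
            congr 2
            push_cast
            ring
    calc AR n₂ + ∑ t₂ ∈ Finset.Ico (n + r + 1) n₂, AR t₂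
        ≤ Real.exp (-lam * (r : ℝ)) + Real.exp (-lam * (r : ℝ)) / (1 - ρ) :=
          add_le_add hARn₂ hrest
      _ = (1 + 1 / (1 - ρ)) * Real.exp (-lam * (r : ℝ)) := by
          field_simp
  have hZsum : ∑ γ'' ∈ ZF, Real.exp (Phi V ω n₁ n₂ γ'') ≤ Z V ω n₁ n₂ x₁ x₂ := by
    apply sum_le_Z h12
    intro γ hγ
    rw [hZF, Set.Finite.mem_toFinset] at hγ
    exact hγ
  have hsum2 : ∑ q ∈ (gridL ×ˢ gridR) ×ˢ ZF,
      (AL q.1.1 * AR q.1.2 * Real.exp (M₀ + M₁) * Real.exp (Phi V ω n₁ n₂ q.2))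
      = (∑ t₁ ∈ gridL, AL t₁) * ((∑ t₂ ∈ gridR, AR t₂) * (Real.exp (M₀ + M₁)
        * (∑ γ'' ∈ ZF, Real.exp (Phi V ω n₁ n₂ γ'')))) := by
    rw [Finset.sum_product, Finset.sum_product]
    have e1 : ∀ t₁ ∈ gridL, (∑ t₂ ∈ gridR, ∑ γ'' ∈ ZF,
        AL t₁ * AR t₂ * Real.exp (M₀ + M₁) * Real.exp (Phi V ω n₁ n₂ γ''))
        = AL t₁ * ((∑ t₂ ∈ gridR, AR t₂) * (Real.exp (M₀ + M₁)
          * (∑ γ'' ∈ ZF, Real.exp (Phi V ω n₁ n₂ γ'')))) := by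
      intro t₁ _
      have e2 : ∀ t₂ ∈ gridR, (∑ γ'' ∈ ZF,
          AL t₁ * AR t₂ * Real.exp (M₀ + M₁) * Real.exp (Phi V ω n₁ n₂ γ''))
          = AR t₂ * (AL t₁ * (Real.exp (M₀ + M₁)
            * (∑ γ'' ∈ ZF, Real.exp (Phi V ω n₁ n₂ γ'')))) := by
        intro t₂ _
        rw [← Finset.mul_sum]
        ring
      rw [Finset.sum_congr rfl e2, ← Finset.sum_mul]
      ring
    rw [Finset.sum_congr rfl e1, ← Finset.sum_mul]
  have hALpos : 0 ≤ ∑ t₁ ∈ gridL, AL t₁ :=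
    Finset.sum_nonneg fun t _ => (Real.exp_pos _).le
  have hARpos : 0 ≤ ∑ t₂ ∈ gridR, AR t₂ :=
    Finset.sum_nonneg fun t _ => (Real.exp_pos _).le
  have hSpos : 0 ≤ ∑ γ'' ∈ ZF, Real.exp (Phi V ω n₁ n₂ γ'') :=
    Finset.sum_nonneg fun t _ => (Real.exp_pos _).le
  have hZ0 : 0 ≤ Z V ω n₁ n₂ x₁ x₂ := Z_nonneg h12
  have hcL : (0:ℝ) ≤ (1 + 1 / (1 - ρ)) * Real.exp (-lam * ((r : ℝ) + 1)) := by positivity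
  have hcR : (0:ℝ) ≤ (1 + 1 / (1 - ρ)) * Real.exp (-lam * (r : ℝ)) := by positivity
  calc ∑ q ∈ (gridL ×ˢ gridR) ×ˢ ZF, ∑ γ ∈ Bad.filter (fun γ => H γ = q),
        Real.exp (Phi V ω n₁ n₂ γ)
      ≤ ∑ q ∈ (gridL ×ˢ gridR) ×ˢ ZF,
          (AL q.1.1 * AR q.1.2 * Real.exp (M₀ + M₁) * Real.exp (Phi V ω n₁ n₂ q.2)) :=
        Finset.sum_le_sum hfiber
    _ = (∑ t₁ ∈ gridL, AL t₁) * ((∑ t₂ ∈ gridR, AR t₂) * (Real.exp (M₀ + M₁)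
        * (∑ γ'' ∈ ZF, Real.exp (Phi V ω n₁ n₂ γ'')))) := hsum2
    _ ≤ ((1 + 1 / (1 - ρ)) * Real.exp (-lam * ((r : ℝ) + 1)))
        * (((1 + 1 / (1 - ρ)) * Real.exp (-lam * (r : ℝ)))
          * (Real.exp (M₀ + M₁) * Z V ω n₁ n₂ x₁ x₂)) := by
      apply mul_le_mul hALsum ?_ ?_ hcL
      · apply mul_le_mul hARsum ?_ ?_ hcR
        · exact mul_le_mul_of_nonneg_left hZsum (Real.exp_pos _).le
        · positivity
      · positivity
    _ ≤ ((1 + 1 / (1 - ρ))^2 * Real.exp (M₀ + M₁)) * Real.exp (-2 * lam * r)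
        * Z V ω n₁ n₂ x₁ x₂ := by
      have hee : Real.exp (-lam * ((r : ℝ) + 1)) * Real.exp (-lam * (r : ℝ))
          ≤ Real.exp (-2 * lam * r) := by
        rw [← Real.exp_add, Real.exp_le_exp]
        nlinarith [hlam]
      have heq : ((1 + 1 / (1 - ρ)) * Real.exp (-lam * ((r : ℝ) + 1)))
          * (((1 + 1 / (1 - ρ)) * Real.exp (-lam * (r : ℝ)))
            * (Real.exp (M₀ + M₁) * Z V ω n₁ n₂ x₁ x₂))
          = (((1 + 1 / (1 - ρ))^2 * Real.exp (M₀ + M₁)) * Z V ω n₁ n₂ x₁ x₂)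
            * (Real.exp (-lam * ((r : ℝ) + 1)) * Real.exp (-lam * (r : ℝ))) := by
        ring
      rw [heq]
      calc (((1 + 1 / (1 - ρ))^2 * Real.exp (M₀ + M₁)) * Z V ω n₁ n₂ x₁ x₂)
            * (Real.exp (-lam * ((r : ℝ) + 1)) * Real.exp (-lam * (r : ℝ)))
          ≤ (((1 + 1 / (1 - ρ))^2 * Real.exp (M₀ + M₁)) * Z V ω n₁ n₂ x₁ x₂)
            * Real.exp (-2 * lam * r) := by
            apply mul_le_mul_of_nonneg_left hee
            positivity
        _ = ((1 + 1 / (1 - ρ))^2 * Real.exp (M₀ + M₁)) * Real.exp (-2 * lam * r)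
            * Z V ω n₁ n₂ x₁ x₂ := by ring


/-! ### measurability lemmas -/

section Meas

variable {d : ℕ}

lemma measSet_coord_eq (m : ℤ) (x : X d) : MeasurableSet {α : ℤ → X d | α m = x} := by
  have h : {α : ℤ → X d | α m = x} = ⋂ i : Fin d, (fun α : ℤ → X d => α m i) ⁻¹' {x i} := by
    ext α
    simp [funext_iff]
  rw [h]
  refine MeasurableSet.iInter fun i => ?_
  exact ((measurable_pi_apply i).comp (measurable_pi_apply m)) (measurableSet_singleton (x i))

lemma measSet_coord_eq' (m m' : ℤ) : MeasurableSet {α : ℤ → X d | α m = α m'} := by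
  have h : {α : ℤ → X d | α m = α m'}
      = ⋃ x : X d, ({α : ℤ → X d | α m = x} ∩ {α : ℤ → X d | α m' = x}) := by
    ext α
    simp only [Set.mem_setOf_eq, Set.mem_iUnion, Set.mem_inter_iff]
    constructor
    · intro hh; exact ⟨α m', hh, rfl⟩
    · rintro ⟨x, h1, h2⟩; rw [h1, h2]
  rw [h]
  exact MeasurableSet.iUnion fun x => (measSet_coord_eq m x).inter (measSet_coord_eq m' x)

lemma measSet_stepOK (m : ℤ) : MeasurableSet {α : ℤ → X d | stepOK (α m) (α (m + 1))} := by
  have h : {α : ℤ → X d | stepOK (α m) (α (m + 1))}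
      = ⋃ x : X d, ⋃ y : X d, ⋃ (_ : stepOK x y),
          ({α : ℤ → X d | α m = x} ∩ {α : ℤ → X d | α (m + 1) = y}) := by
    ext α
    simp only [Set.mem_setOf_eq, Set.mem_iUnion, Set.mem_inter_iff]
    constructor
    · intro hh; exact ⟨α m, α (m + 1), hh, rfl, rfl⟩
    · rintro ⟨x, y, hxy, h1, h2⟩; rw [h1, h2]; exact hxy
  rw [h]
  exact MeasurableSet.iUnion fun x => MeasurableSet.iUnion fun y =>
    MeasurableSet.iUnion fun _ => (measSet_coord_eq m x).inter (measSet_coord_eq (m + 1) y)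

lemma measSet_AF (n₁ n₂ : ℤ) :
    MeasurableSet {γ : ℤ → X d | Adm n₁ n₂ γ ∧ Frozen n₁ n₂ γ} := by
  have hAdm : MeasurableSet {γ : ℤ → X d | Adm n₁ n₂ γ} := by
    have h : {γ : ℤ → X d | Adm n₁ n₂ γ}
        = ⋂ m : ℤ, {γ : ℤ → X d | n₁ ≤ m → m < n₂ → stepOK (γ m) (γ (m + 1))} := by
      ext γ; simp [Adm]
    rw [h]
    refine MeasurableSet.iInter fun m => ?_
    by_cases h1 : n₁ ≤ m
    · by_cases h2 : m < n₂
      · have : {γ : ℤ → X d | n₁ ≤ m → m < n₂ → stepOK (γ m) (γ (m + 1))}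
            = {γ : ℤ → X d | stepOK (γ m) (γ (m + 1))} := by
          ext γ; simp [h1, h2]
        rw [this]; exact measSet_stepOK m
      · have : {γ : ℤ → X d | n₁ ≤ m → m < n₂ → stepOK (γ m) (γ (m + 1))} = Set.univ := by
          ext γ; simp [h2]
        rw [this]; exact MeasurableSet.univ
    · have : {γ : ℤ → X d | n₁ ≤ m → m < n₂ → stepOK (γ m) (γ (m + 1))} = Set.univ := by
        ext γ; simp [h1]
      rw [this]; exact MeasurableSet.univ
  have hFro : MeasurableSet {γ : ℤ → X d | Frozen n₁ n₂ γ} := by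
    have h : {γ : ℤ → X d | Frozen n₁ n₂ γ}
        = (⋂ m : ℤ, {γ : ℤ → X d | m ≤ n₁ → γ m = γ n₁})
          ∩ (⋂ m : ℤ, {γ : ℤ → X d | n₂ ≤ m → γ m = γ n₂}) := by
      ext γ; simp [Frozen]
    rw [h]
    have hpart : ∀ (a : ℤ) (P : ℤ → Prop) [DecidablePred P],
        MeasurableSet (⋂ m : ℤ, {γ : ℤ → X d | P m → γ m = γ a}) := by
      intro a P _
      refine MeasurableSet.iInter fun m => ?_
      by_cases hp : P m
      · have : {γ : ℤ → X d | P m → γ m = γ a} = {γ : ℤ → X d | γ m = γ a} := by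
          ext γ; simp [hp]
        rw [this]; exact measSet_coord_eq' m a
      · have : {γ : ℤ → X d | P m → γ m = γ a} = Set.univ := by
          ext γ; simp [hp]
        rw [this]; exact MeasurableSet.univ
    exact (hpart n₁ (fun m => m ≤ n₁)).inter (hpart n₂ (fun m => n₂ ≤ m))
  exact hAdm.inter hFro

lemma measSet_nm_le (m : ℤ) (r : ℕ) : MeasurableSet {α : ℤ → X d | nm (α m) ≤ r} := by
  have h : {α : ℤ → X d | nm (α m) ≤ r}
      = ⋃ x : X d, ⋃ (_ : nm x ≤ r), {α : ℤ → X d | α m = x} := by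
    ext α
    simp only [Set.mem_setOf_eq, Set.mem_iUnion]
    constructor
    · intro hh; exact ⟨α m, hh, rfl⟩
    · rintro ⟨x, hx, h1⟩; rw [h1]; exact hx
  rw [h]
  exact MeasurableSet.iUnion fun x => MeasurableSet.iUnion fun _ => measSet_coord_eq m x

lemma measSet_end (n₁ n₂ : ℤ) (x₁ x₂ : X d) :
    MeasurableSet {α : ℤ → X d | α n₁ = x₁ ∧ α n₂ = x₂} := by
  have h : {α : ℤ → X d | α n₁ = x₁ ∧ α n₂ = x₂}
      = {α : ℤ → X d | α n₁ = x₁} ∩ {α : ℤ → X d | α n₂ = x₂} := rfl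
  rw [h]
  exact (measSet_coord_eq n₁ x₁).inter (measSet_coord_eq n₂ x₂)

lemma mem_ball_iff {r : ℕ} {x : X d} : x ∈ ball d r ↔ nm x ≤ r := by
  rw [ball, Fintype.mem_piFinset]
  rw [nm_le_iff]
  constructor
  · intro h i
    have := h i
    rw [Finset.mem_Icc] at this
    omega
  · intro h i
    rw [Finset.mem_Icc]
    have := h i
    omega

end Meas


set_option maxHeartbeats 2000000 in
/-- Lemma 4.1 (concentration for finite-volume Gibbs marginals). -/
theorem statement9
    (d : ℕ) (hd : 1 ≤ d) (M₀ M₁ : ℝ) (hM₀ : 0 ≤ M₀) (hM₁ : 0 ≤ M₁)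
    (hl0 : 0 < (M₀ - 3 * M₁) / 2 - Real.log (2 * (d : ℝ) + 1))
    (lam : ℝ) (hlam : 0 < lam)
    (hlam' : lam < (M₀ - 3 * M₁) / 2 - Real.log (2 * (d : ℝ) + 1)) :
    ∃ C : ℝ, 0 < C ∧ ∃ N₁ : ℕ → ℕ,
      ∀ (V : X d → ℝ), V 0 = M₀ → (∀ x : X d, x ≠ 0 → |V x| ≤ M₁) →
      ∀ (ω : ℤ → Bool) (n₁ n₂ : ℤ) (μ : Measure (ℤ → X d)),
        FVGibbs d V ω n₁ n₂ μ →
        ∀ (r : ℕ) (n : ℤ), n₁ ≤ n → n ≤ n₂ →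
          μ {γ | nm (γ n₁) ≤ r ∧ nm (γ n₂) ≤ r} = 1 →
          (∀ k : ℕ, r ≤ k →
            (k : ℝ) * (M₁ + lam + Real.log (2 * (d : ℝ) + 1)) <
              ∑ j ∈ Finset.Icc (n + 1) (n + k), xi M₀ M₁ ω j) →
          (∀ k : ℕ, r ≤ k →
            (k : ℝ) * (M₁ + lam + Real.log (2 * (d : ℝ) + 1)) <
              ∑ j ∈ Finset.Icc (n - k + 1) n, xi M₀ M₁ ω j) →
          (N₁ r : ℤ) < n₂ - n → (N₁ r : ℤ) < n - n₁ →
          μ {γ | r < nm (γ n)} < ENNReal.ofReal (C * Real.exp (-2 * lam * r)) := by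
  classical
  set logL : ℝ := Real.log (2 * (d : ℝ) + 1) with hlogL
  have hd0 : (0 : ℝ) ≤ (d : ℝ) := Nat.cast_nonneg d
  have hlogL0 : 0 ≤ logL := Real.log_nonneg (by linarith)
  have hM01 : M₁ ≤ M₀ := by nlinarith [hl0, hlogL0]
  set C₀ : ℝ := (1 + 1 / (1 - Real.exp (-lam)))^2 * Real.exp (M₀ + M₁) with hC₀
  have hρ1 : Real.exp (-lam) < 1 := by rw [Real.exp_lt_one_iff]; linarith
  have hρden : 0 < 1 - Real.exp (-lam) := by linarith [hρ1]
  have hC₀pos : 0 < C₀ := by rw [hC₀]; positivity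
  refine ⟨C₀ + 1, by linarith, ?_⟩
  set K : ℝ := logL + M₀ + M₁ + lam with hK
  have hK0 : 0 ≤ K := by rw [hK]; linarith
  refine ⟨fun r => d * r + r + 2 + Nat.ceil (K * ((d : ℝ) * r + 1) / lam), ?_⟩
  intro V hV0 hV1 ω n₁ n₂ μ hμ r n hn1 hn2 hends hwinR hwinL hNR hNL
  haveI hμprob : IsProbabilityMeasure μ := hμ.1
  -- dispose of r = 0
  rcases Nat.eq_zero_or_pos r with rfl | hr
  · exfalso
    have h := hwinR 0 (le_refl 0)
    rw [show ((0 : ℕ) : ℤ) = 0 by rfl] at h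
    rw [show n + (0 : ℤ) = n by ring] at h
    rw [Finset.Icc_eq_empty (by omega), Finset.sum_empty] at h
    norm_num at h
  -- margins
  have hceil : K * ((d : ℝ) * r + 1) / lam ≤ (Nat.ceil (K * ((d : ℝ) * r + 1) / lam) : ℝ) :=
    Nat.le_ceil _
  have hceil0 : (0 : ℤ) ≤ (Nat.ceil (K * ((d : ℝ) * r + 1) / lam) : ℤ) := by positivity
  have hNcast : ((d * r + r + 2 + Nat.ceil (K * ((d : ℝ) * r + 1) / lam) : ℕ) : ℤ)
      = (d : ℤ) * r + r + 2 + (Nat.ceil (K * ((d : ℝ) * r + 1) / lam) : ℤ) := by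
    push_cast
    ring
  rw [hNcast] at hNR hNL
  have hg1 : ((d : ℤ) * r + r + 1) ≤ n - n₁ := by omega
  have hg2 : ((d : ℤ) * r + r + 2) ≤ n₂ - n := by omega
  have h12 : n₁ ≤ n₂ := by
    have hdr0 : (0:ℤ) ≤ (d:ℤ) * r := by positivity
    omega
  have hdiv : lam * (K * ((d : ℝ) * r + 1) / lam) = K * ((d : ℝ) * r + 1) := by
    field_simp
  have hceilR : (0 : ℝ) ≤ (Nat.ceil (K * ((d : ℝ) * r + 1) / lam) : ℝ) := Nat.cast_nonneg _
  have hNLR : ((d : ℝ) * r + r + 2 + (Nat.ceil (K * ((d : ℝ) * r + 1) / lam) : ℝ)) + 1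
      ≤ (n : ℝ) - n₁ := by
    have : ((d : ℤ) * r + r + 2 + (Nat.ceil (K * ((d : ℝ) * r + 1) / lam) : ℤ)) + 1
        ≤ n - n₁ := by omega
    exact_mod_cast this
  have hNRR : ((d : ℝ) * r + r + 2 + (Nat.ceil (K * ((d : ℝ) * r + 1) / lam) : ℝ)) + 1
      ≤ (n₂ : ℝ) - n := by
    have : ((d : ℤ) * r + r + 2 + (Nat.ceil (K * ((d : ℝ) * r + 1) / lam) : ℤ)) + 1
        ≤ n₂ - n := by omega
    exact_mod_cast this
  have hg3 : lam * ((r : ℝ) + 1) + (logL + M₀ + M₁) * ((d : ℝ) * r)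
      ≤ lam * (((n : ℝ) - n₁) - (d : ℝ) * r) := by
    have hstep : K * ((d : ℝ) * r + 1)
        ≤ lam * (Nat.ceil (K * ((d : ℝ) * r + 1) / lam) : ℝ) := by
      calc K * ((d : ℝ) * r + 1) = lam * (K * ((d : ℝ) * r + 1) / lam) := hdiv.symm
        _ ≤ lam * (Nat.ceil (K * ((d : ℝ) * r + 1) / lam) : ℝ) :=
            mul_le_mul_of_nonneg_left hceil (le_of_lt hlam)
    have hdr0 : (0:ℝ) ≤ (d:ℝ) * r := by positivity
    nlinarith [hNLR, hK0, hlam, hdr0]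
  have hg4 : lam * (r : ℝ) + (logL + M₀ + M₁) * ((d : ℝ) * r)
      ≤ lam * (((n₂ : ℝ) - n) - (d : ℝ) * r - 1) := by
    have hstep : K * ((d : ℝ) * r + 1)
        ≤ lam * (Nat.ceil (K * ((d : ℝ) * r + 1) / lam) : ℝ) := by
      calc K * ((d : ℝ) * r + 1) = lam * (K * ((d : ℝ) * r + 1) / lam) := hdiv.symm
        _ ≤ lam * (Nat.ceil (K * ((d : ℝ) * r + 1) / lam) : ℝ) :=
            mul_le_mul_of_nonneg_left hceil (le_of_lt hlam)
    have hdr0 : (0:ℝ) ≤ (d:ℝ) * r := by positivity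
    nlinarith [hNRR, hK0, hlam, hdr0]
  -- the sets
  set AF := {γ : ℤ → X d | Adm n₁ n₂ γ ∧ Frozen n₁ n₂ γ} with hAF
  set E := {γ : ℤ → X d | nm (γ n₁) ≤ r ∧ nm (γ n₂) ≤ r} with hE
  set BadS := {γ : ℤ → X d | r < nm (γ n)} with hBadS
  set Cyl : (ℤ → X d) → Set (ℤ → X d) :=
    fun γ => {α | ∀ m : ℤ, n₁ ≤ m → m ≤ n₂ → α m = γ m} with hCyl
  set EndS : X d × X d → Set (ℤ → X d) :=
    fun p => {α | α n₁ = p.1 ∧ α n₂ = p.2} with hEndS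
  set BadF : X d × X d → Finset (ℤ → X d) :=
    fun p => (pathSet_finite d n₁ n₂ h12 p.1 p.2).toFinset.filter
      (fun γ => r < nm (γ n)) with hBadF
  have hAFmeas : MeasurableSet AF := measSet_AF n₁ n₂
  have hEmeas : MeasurableSet E :=
    (measSet_nm_le n₁ r).inter (measSet_nm_le n₂ r)
  -- complement is null
  have hAF1 : μ AF = 1 := hμ.2.1
  have hcompl : μ ((AF ∩ E)ᶜ) = 0 := by
    have h1 : μ (AFᶜ) = 0 := by
      rw [measure_compl hAFmeas (measure_ne_top μ AF), hAF1, measure_univ]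
      simp
    have h2 : μ (Eᶜ) = 0 := by
      rw [measure_compl hEmeas (measure_ne_top μ E), hends, measure_univ]
      simp
    rw [Set.compl_inter]
    have := measure_union_le (μ := μ) (AFᶜ) (Eᶜ)
    rw [h1, h2] at this
    simpa using this
  -- cover
  have hcover : BadS ∩ (AF ∩ E) ⊆
      ⋃ p ∈ (ball d r) ×ˢ (ball d r), ⋃ γ ∈ BadF p, Cyl γ := by
    rintro α ⟨hbad, ⟨hAdm, hFro⟩, he1, he2⟩
    rw [Set.mem_iUnion]
    refine ⟨(α n₁, α n₂), ?_⟩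
    rw [Set.mem_iUnion]
    refine ⟨?_, ?_⟩
    · rw [Finset.mem_product]
      exact ⟨mem_ball_iff.mpr he1, mem_ball_iff.mpr he2⟩
    · rw [Set.mem_iUnion]
      refine ⟨α, ?_⟩
      rw [Set.mem_iUnion]
      refine ⟨?_, fun m _ _ => rfl⟩
      rw [hBadF, Finset.mem_filter, Set.Finite.mem_toFinset]
      exact ⟨⟨hAdm, hFro, rfl, rfl⟩, hbad⟩
  -- per-cylinder bound
  have hcylbound : ∀ p ∈ (ball d r) ×ˢ (ball d r), ∀ γ ∈ BadF p,
      μ (Cyl γ) ≤ ENNReal.ofReal (Real.exp (Phi V ω n₁ n₂ γ) / Z V ω n₁ n₂ p.1 p.2)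
        * μ (EndS p) := by
    intro p _ γ hγ
    rw [hBadF, Finset.mem_filter, Set.Finite.mem_toFinset] at hγ
    obtain ⟨⟨hAdm, hFro, hend1, hend2⟩, _⟩ := hγ
    have hCylEnd : Cyl γ ⊆ EndS p := by
      intro α hα
      exact ⟨by rw [hα n₁ (le_refl _) h12, hend1], by rw [hα n₂ h12 (le_refl _), hend2]⟩
    by_cases h0 : μ {α | α n₁ = γ n₁ ∧ α n₂ = γ n₂} = 0
    · have hEnd0 : μ (EndS p) = 0 := by
        rw [hEndS]
        simp only
        rw [← hend1, ← hend2]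
        exact h0
      have : μ (Cyl γ) = 0 :=
        le_antisymm (le_trans (measure_mono hCylEnd) (le_of_eq hEnd0)) zero_le
      rw [this, hEnd0, mul_zero]
    · have := hμ.2.2 γ hAdm h0
      have hEndeq : {α : ℤ → X d | α n₁ = γ n₁ ∧ α n₂ = γ n₂} = EndS p := by
        rw [hEndS, hend1, hend2]
      rw [hEndeq] at this
      rw [hend1, hend2] at this
      calc μ (Cyl γ) = ENNReal.ofReal (Real.exp (Phi V ω n₁ n₂ γ) / Z V ω n₁ n₂ p.1 p.2)
          * μ (EndS p) := this
        _ ≤ _ := le_refl _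
  -- sum over one endpoint class
  have hclass : ∀ p ∈ (ball d r) ×ˢ (ball d r),
      ∑ γ ∈ BadF p, μ (Cyl γ)
        ≤ ENNReal.ofReal (C₀ * Real.exp (-2 * lam * r)) * μ (EndS p) := by
    intro p hp
    rw [Finset.mem_product] at hp
    have hx₁ : nm p.1 ≤ r := mem_ball_iff.mp hp.1
    have hx₂ : nm p.2 ≤ r := mem_ball_iff.mp hp.2
    have hsum : ∑ γ ∈ BadF p, Real.exp (Phi V ω n₁ n₂ γ) / Z V ω n₁ n₂ p.1 p.2
        ≤ C₀ * Real.exp (-2 * lam * r) := by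
      rcases Finset.eq_empty_or_nonempty (BadF p) with he | ⟨γ₀, hγ₀⟩
      · rw [he, Finset.sum_empty]
        positivity
      · have hγ₀mem : γ₀ ∈ PathSet d n₁ n₂ p.1 p.2 := by
          have := (Finset.mem_filter.mp hγ₀).1
          rw [hBadF] at hγ₀
          rw [Set.Finite.mem_toFinset] at this
          exact this
        have hZpos : 0 < Z V ω n₁ n₂ p.1 p.2 := Z_pos h12 hγ₀mem
        rw [← Finset.sum_div]
        rw [div_le_iff₀ hZpos]
        have := core_bound hd hM₀ hM₁ hM01 hlam hV0 hV1 hr hwinR hwinL hg1 hg2 hg3 hg4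
          hx₁ hx₂ h12
        calc ∑ γ ∈ BadF p, Real.exp (Phi V ω n₁ n₂ γ)
            ≤ ((1 + 1 / (1 - Real.exp (-lam)))^2 * Real.exp (M₀ + M₁))
              * Real.exp (-2 * lam * r) * Z V ω n₁ n₂ p.1 p.2 := this
          _ = C₀ * Real.exp (-2 * lam * r) * Z V ω n₁ n₂ p.1 p.2 := by rw [hC₀]
    calc ∑ γ ∈ BadF p, μ (Cyl γ)
        ≤ ∑ γ ∈ BadF p, ENNReal.ofReal (Real.exp (Phi V ω n₁ n₂ γ)
            / Z V ω n₁ n₂ p.1 p.2) * μ (EndS p) :=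
          Finset.sum_le_sum (fun γ hγ => hcylbound p (by rwa [Finset.mem_product]) γ hγ)
      _ = (∑ γ ∈ BadF p, ENNReal.ofReal (Real.exp (Phi V ω n₁ n₂ γ)
            / Z V ω n₁ n₂ p.1 p.2)) * μ (EndS p) := by rw [Finset.sum_mul]
      _ = ENNReal.ofReal (∑ γ ∈ BadF p, Real.exp (Phi V ω n₁ n₂ γ)
            / Z V ω n₁ n₂ p.1 p.2) * μ (EndS p) := by
          rw [ENNReal.ofReal_sum_of_nonneg]
          intro γ _
          have : 0 ≤ Z V ω n₁ n₂ p.1 p.2 := Z_nonneg h12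
          positivity
      _ ≤ ENNReal.ofReal (C₀ * Real.exp (-2 * lam * r)) * μ (EndS p) :=
          mul_le_mul_left (ENNReal.ofReal_le_ofReal hsum) _
  -- sum of endpoint-class measures
  have hdisj : Set.Pairwise ↑((ball d r) ×ˢ (ball d r))
      (Function.onFun (AEDisjoint μ) EndS) := by
    intro p _ p' _ hne
    apply Disjoint.aedisjoint
    rw [Set.disjoint_left]
    intro α hα hα'
    apply hne
    rw [hEndS] at hα hα'
    have h1 : p.1 = p'.1 := by rw [← hα.1, ← hα'.1]
    have h2 : p.2 = p'.2 := by rw [← hα.2, ← hα'.2]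
    exact Prod.ext h1 h2
  have hendsum : ∑ p ∈ (ball d r) ×ˢ (ball d r), μ (EndS p) ≤ 1 := by
    have := sum_measure_le_measure_univ (μ := μ) (s := (ball d r) ×ˢ (ball d r))
      (t := EndS) (fun p _ => (measSet_end n₁ n₂ p.1 p.2).nullMeasurableSet) hdisj
    rwa [measure_univ] at this
  -- put everything together
  have hfinal : μ BadS ≤ ENNReal.ofReal (C₀ * Real.exp (-2 * lam * r)) := by
    calc μ BadS ≤ μ (BadS ∩ (AF ∩ E)) + μ (BadS \ (AF ∩ E)) :=
          measure_le_inter_add_diff μ BadS (AF ∩ E)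
      _ ≤ μ (BadS ∩ (AF ∩ E)) + μ ((AF ∩ E)ᶜ) := by
          apply add_le_add_right
          apply measure_mono
          intro α hα
          exact hα.2
      _ = μ (BadS ∩ (AF ∩ E)) := by rw [hcompl, add_zero]
      _ ≤ μ (⋃ p ∈ (ball d r) ×ˢ (ball d r), ⋃ γ ∈ BadF p, Cyl γ) :=
          measure_mono hcover
      _ ≤ ∑ p ∈ (ball d r) ×ˢ (ball d r), μ (⋃ γ ∈ BadF p, Cyl γ) :=
          measure_biUnion_finset_le _ _
      _ ≤ ∑ p ∈ (ball d r) ×ˢ (ball d r), ∑ γ ∈ BadF p, μ (Cyl γ) :=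
          Finset.sum_le_sum (fun p _ => measure_biUnion_finset_le _ _)
      _ ≤ ∑ p ∈ (ball d r) ×ˢ (ball d r),
            ENNReal.ofReal (C₀ * Real.exp (-2 * lam * r)) * μ (EndS p) :=
          Finset.sum_le_sum hclass
      _ = ENNReal.ofReal (C₀ * Real.exp (-2 * lam * r))
            * ∑ p ∈ (ball d r) ×ˢ (ball d r), μ (EndS p) := by rw [Finset.mul_sum]
      _ ≤ ENNReal.ofReal (C₀ * Real.exp (-2 * lam * r)) * 1 :=
          mul_le_mul_right hendsum _
      _ = ENNReal.ofReal (C₀ * Real.exp (-2 * lam * r)) := mul_one _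
  have hstrict : ENNReal.ofReal (C₀ * Real.exp (-2 * lam * r))
      < ENNReal.ofReal ((C₀ + 1) * Real.exp (-2 * lam * r)) := by
    rw [ENNReal.ofReal_lt_ofReal_iff (by positivity)]
    have := Real.exp_pos (-2 * lam * r)
    nlinarith [this, hC₀pos]
  exact lt_of_le_of_lt hfinal hstrict

end BKpaper
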